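/- arXiv:2002.01084 — 7 statements merged into one kernel-verified Lean document; each statement's English description precedes it below -/
import Mathlib

section
/- Fix an integer n ≥ 2. Let ξ be a nonnegative random variable with cumulative distribution function F, and let W ∈ D(n) be bounded from below with lim_{y→∞} W(y) = 0. Then E[W(ξ)] = ∫₀^∞ (−1)^n W^(n)(y) F_n(y) dy, where both sides take values in [0, ∞]. -/
open MeasureTheory Filter Set Topology
open scoped ENNReal

/-- Iterated antiderivatives of a cdf: `iterCdf F 0 = F₁ = F` and
`iterCdf F i y = F_{i+1}(y) = ∫₀^y F_i(z) dz`. -/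
noncomputable def iterCdf (F : ℝ → ℝ) : ℕ → ℝ → ℝ
  | 0 => F
  | i + 1 => fun y => ∫ z in (0:ℝ)..y, iterCdf F i z

lemma factSucc (m : ℕ) : ((m+1).factorial : ℝ) = (m+1) * m.factorial := by
  rw [Nat.factorial_succ]; push_cast; ring

lemma polyInt1 (m : ℕ) (a b : ℝ) :
    ∫ t in a..b, (t - a) ^ m / m.factorial = (b - a) ^ (m+1) / (m+1).factorial := by
  have h : ∫ t in a..b, (t - a) ^ m = ∫ t in (a-a)..(b-a), t ^ m := by
    rw [← intervalIntegral.integral_comp_sub_right (fun t => t ^ m) a]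
  have hf : (m.factorial : ℝ) ≠ 0 := by positivity
  have hm : ((m:ℝ) + 1) ≠ 0 := by positivity
  rw [intervalIntegral.integral_div, h, integral_pow, factSucc]
  field_simp
  simp

lemma polyInt2 (m : ℕ) (x z : ℝ) :
    ∫ y in x..z, (z - y) ^ m / m.factorial = (z - x) ^ (m+1) / (m+1).factorial := by
  have h : ∫ y in x..z, (z - y) ^ m = ∫ t in (z-z)..(z-x), t ^ m := by
    rw [← intervalIntegral.integral_comp_sub_left (fun t => t ^ m) z]
  have hf : (m.factorial : ℝ) ≠ 0 := by positivity
  have hm : ((m:ℝ) + 1) ≠ 0 := by positivity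
  rw [intervalIntegral.integral_div, h, integral_pow, factSucc]
  field_simp
  simp

/-- FTC on `(x, ∞)` in `ℝ≥0∞` form. -/
lemma lint_ftc {f f' : ℝ → ℝ} (hder : ∀ y > (0:ℝ), HasDerivAt f (f' y) y)
    (hpos : ∀ y > (0:ℝ), 0 ≤ f' y) (hlim : Tendsto f atTop (𝓝 0))
    {x : ℝ} (hx : 0 < x) :
    ∫⁻ y in Ioi x, ENNReal.ofReal (f' y) = ENNReal.ofReal (-f x) := by
  have hder' : ∀ y ∈ Ici x, HasDerivAt f (f' y) y :=
    fun y hy => hder y (lt_of_lt_of_le hx hy)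
  have hpos' : ∀ y ∈ Ioi x, 0 ≤ f' y := fun y hy => hpos y (lt_trans hx hy)
  have hint : IntegrableOn f' (Ioi x) :=
    integrableOn_Ioi_deriv_of_nonneg' hder' hpos' hlim
  have heq : ∫ y in Ioi x, f' y = 0 - f x :=
    integral_Ioi_of_hasDerivAt_of_nonneg' hder' hpos' hlim
  rw [← ofReal_integral_eq_lintegral_ofReal hint]
  · rw [heq]; norm_num
  · exact (ae_restrict_iff' measurableSet_Ioi).2 (ae_of_all _ hpos')

lemma tonelli_step (G : ℝ → ℝ≥0∞) (hG : Measurable G) (j : ℕ) (x : ℝ) :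
    ∫⁻ y in Ioi x, ∫⁻ z in Ioi y, ENNReal.ofReal ((z-y)^j / j.factorial) * G z
      = ∫⁻ z in Ioi x, ENNReal.ofReal ((z-x)^(j+1) / (j+1).factorial) * G z := by
  set h : ℝ → ℝ → ℝ≥0∞ := fun y z =>
    ENNReal.ofReal (if x < y ∧ y < z then (z-y)^j / j.factorial else 0) * G z with hh
  have hmeas : Measurable (Function.uncurry h) := by
    apply Measurable.mul
    · apply ENNReal.measurable_ofReal.comp
      apply Measurable.ite
      · exact (measurableSet_lt measurable_const measurable_fst).inter
          (measurableSet_lt measurable_fst measurable_snd)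
      · fun_prop
      · exact measurable_const
    · exact hG.comp measurable_snd
  have key1 : ∀ y, y ∈ Ioi x →
      (∫⁻ z in Ioi y, ENNReal.ofReal ((z-y)^j / j.factorial) * G z) = ∫⁻ z, h y z := by
    intro y hy
    rw [← lintegral_indicator measurableSet_Ioi]
    refine lintegral_congr fun z => ?_
    by_cases hz : y < z
    · simp [hh, indicator_of_mem hz, hz, hy.out]
    · simp [hh, indicator_of_notMem hz, hz]
  have key0 : ∀ y, y ∉ Ioi x → (∫⁻ z, h y z) = 0 := by
    intro y hy
    have : ∀ z, h y z = 0 := by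
      intro z
      have : ¬ (x < y ∧ y < z) := fun hc => hy hc.1
      simp [hh, this]
    simp [this]
  calc ∫⁻ y in Ioi x, ∫⁻ z in Ioi y, ENNReal.ofReal ((z-y)^j / j.factorial) * G z
      = ∫⁻ y in Ioi x, ∫⁻ z, h y z := setLIntegral_congr_fun measurableSet_Ioi
        key1
    _ = ∫⁻ y, ∫⁻ z, h y z := by
        rw [← lintegral_indicator measurableSet_Ioi]
        refine lintegral_congr fun y => ?_
        by_cases hy : y ∈ Ioi x
        · rw [indicator_of_mem hy]
        · rw [indicator_of_notMem hy, key0 y hy]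
    _ = ∫⁻ z, ∫⁻ y, h y z := lintegral_lintegral_swap hmeas.aemeasurable
    _ = ∫⁻ z, (Ioi x).indicator
          (fun z => ENNReal.ofReal ((z-x)^(j+1) / (j+1).factorial) * G z) z := by
        refine lintegral_congr fun z => ?_
        have hfac : (fun y => ENNReal.ofReal
            (if x < y ∧ y < z then (z-y)^j / j.factorial else 0)) =
            (Ioo x z).indicator (fun y => ENNReal.ofReal ((z-y)^j / j.factorial)) := by
          funext y
          by_cases hy : y ∈ Ioo x z
          · simp [indicator_of_mem hy, hy.1, hy.2]
          · rw [indicator_of_notMem hy]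
            have : ¬ (x < y ∧ y < z) := fun hc => hy ⟨hc.1, hc.2⟩
            simp [this]
        have : ∫⁻ y, h y z = (∫⁻ y, ENNReal.ofReal
            (if x < y ∧ y < z then (z-y)^j / j.factorial else 0)) * G z := by
          rw [hh]
          exact lintegral_mul_const _ (by
            apply ENNReal.measurable_ofReal.comp
            apply Measurable.ite
            · exact (measurableSet_lt measurable_const measurable_id).inter
                (measurableSet_lt measurable_id measurable_const)
            · fun_prop
            · exact measurable_const)
        rw [this, hfac]
        by_cases hz : z ∈ Ioi x
        · rw [indicator_of_mem hz, lintegral_indicator measurableSet_Ioo]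
          have hxz : x ≤ z := le_of_lt hz.out
          have hcontz : Continuous (fun y : ℝ => (z-y)^j / j.factorial) := by fun_prop
          have hint : IntegrableOn (fun y => (z-y)^j / j.factorial) (Ioo x z) :=
            (hcontz.integrableOn_Icc).mono_set Ioo_subset_Icc_self
          have hnn : 0 ≤ᵐ[volume.restrict (Ioo x z)] fun y => (z-y)^j / j.factorial := by
            refine (ae_restrict_iff' measurableSet_Ioo).2 (ae_of_all _ fun y hy => ?_)
            have : 0 ≤ z - y := by linarith [hy.2]
            positivity
          rw [← ofReal_integral_eq_lintegral_ofReal hint hnn,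
            ← MeasureTheory.integral_Ioc_eq_integral_Ioo,
            ← intervalIntegral.integral_of_le hxz, polyInt2 j x z]
        · rw [indicator_of_notMem hz, Ioo_eq_empty (fun hc => hz hc)]
          simp
    _ = ∫⁻ z in Ioi x, ENNReal.ofReal ((z-x)^(j+1) / (j+1).factorial) * G z := by
        rw [lintegral_indicator measurableSet_Ioi]

/-- If `u' = -v ≤ 0` on `(0,∞)` then `u` is antitone on `(0,∞)`. -/
lemma antitone_aux {u v : ℝ → ℝ} (hder : ∀ y > (0:ℝ), HasDerivAt u (-(v y)) y)
    (hv : ∀ y > (0:ℝ), 0 ≤ v y) : AntitoneOn u (Ioi 0) := by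
  have hcont : ContinuousOn u (Ioi 0) :=
    fun y hy => ((hder y hy).continuousAt).continuousWithinAt
  refine antitoneOn_of_deriv_nonpos (convex_Ioi 0) hcont ?_ ?_
  · intro y hy
    rw [interior_Ioi] at hy
    exact ((hder y hy).differentiableAt).differentiableWithinAt
  intro y hy
  rw [interior_Ioi] at hy
  rw [(hder y hy).deriv]
  linarith [hv y hy]

/-- If moreover `u → 0` at `∞`, then `u ≥ 0` on `(0,∞)`. -/
lemma nonneg_aux {u v : ℝ → ℝ} (hder : ∀ y > (0:ℝ), HasDerivAt u (-(v y)) y)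
    (hv : ∀ y > (0:ℝ), 0 ≤ v y) (hu : Tendsto u atTop (𝓝 0)) :
    ∀ x > (0:ℝ), 0 ≤ u x := by
  intro x hx
  have hanti := antitone_aux hder hv
  refine le_of_tendsto hu ?_
  filter_upwards [Filter.eventually_ge_atTop x] with y hy
  exact hanti hx (mem_Ioi.2 (lt_of_lt_of_le hx hy)) hy

/-- Key decay: if `u' = -v`, `v' = -w`, with `v, w ≥ 0` on `(0,∞)` and `u → 0` at `∞`,
then `v → 0` at `∞`. -/
lemma tendsto_next {u v w : ℝ → ℝ}
    (hderu : ∀ y > (0:ℝ), HasDerivAt u (-(v y)) y)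
    (hderv : ∀ y > (0:ℝ), HasDerivAt v (-(w y)) y)
    (hv : ∀ y > (0:ℝ), 0 ≤ v y) (hw : ∀ y > (0:ℝ), 0 ≤ w y)
    (hu : Tendsto u atTop (𝓝 0)) : Tendsto v atTop (𝓝 0) := by
  have hanti : AntitoneOn v (Ioi 0) := antitone_aux hderv hw
  have hun : ∀ x > (0:ℝ), 0 ≤ u x := nonneg_aux hderu hv hu
  have hbound : ∀ y : ℝ, 2 ≤ y → v y * (y/2) ≤ u (y/2) := by
    intro y hy
    have hy2 : (0:ℝ) < y/2 := by linarith
    have hyy : y/2 ≤ y := by linarith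
    have hcontv : ContinuousOn v (Icc (y/2) y) := fun t ht =>
      ((hderv t (lt_of_lt_of_le hy2 ht.1)).continuousAt).continuousWithinAt
    have hftc : ∫ t in (y/2)..y, -(v t) = u y - u (y/2) := by
      apply intervalIntegral.integral_eq_sub_of_hasDerivAt
      · intro t ht
        rw [uIcc_of_le hyy] at ht
        exact hderu t (lt_of_lt_of_le hy2 ht.1)
      · apply ContinuousOn.intervalIntegrable
        rw [uIcc_of_le hyy]
        exact hcontv.neg
    have hmono : ∫ t in (y/2)..y, v y ≤ ∫ t in (y/2)..y, v t := by
      apply intervalIntegral.integral_mono_on hyy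
      · exact intervalIntegrable_const
      · exact (hcontv.intervalIntegrable_of_Icc hyy)
      · intro t ht
        exact hanti (lt_of_lt_of_le hy2 ht.1) (by linarith : (0:ℝ) < y) ht.2
    have h1 : ∫ t in (y/2)..y, v t = u (y/2) - u y := by
      have := hftc
      rw [intervalIntegral.integral_neg] at this
      linarith
    have h2 : ∫ t in (y/2)..y, (v y) = v y * (y/2) := by
      rw [intervalIntegral.integral_const]
      simp only [smul_eq_mul]
      ring_nf
    have huy : 0 ≤ u y := hun y (by linarith)
    nlinarith [hmono]
  have hsq : ∀ᶠ y in atTop, v y ≤ u (y/2) := by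
    filter_upwards [Filter.eventually_ge_atTop (2:ℝ)] with y hy
    have hy2 : (0:ℝ) < y/2 := by linarith
    have hb := hbound y hy
    have h1 : (1:ℝ) ≤ y/2 := by linarith
    have hvy : 0 ≤ v y := hv y (by linarith)
    nlinarith
  have hlow : ∀ᶠ y in atTop, 0 ≤ v y := by
    filter_upwards [Filter.eventually_gt_atTop (0:ℝ)] with y hy using hv y hy
  have hcomp : Tendsto (fun y => u (y/2)) atTop (𝓝 0) :=
    hu.comp (tendsto_id.atTop_div_const (by norm_num))
  exact tendsto_of_tendsto_of_tendsto_of_le_of_le' tendsto_const_nhds hcomp hlow hsq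

lemma iterCdf_mono {F : ℝ → ℝ} (hF0 : ∀ y, 0 ≤ F y) (hFm : MonotoneOn F (Ici 0)) (i : ℕ) :
    (∀ y ∈ Ici (0:ℝ), 0 ≤ iterCdf F i y) ∧ MonotoneOn (iterCdf F i) (Ici 0) := by
  induction i with
  | zero => exact ⟨fun y _ => hF0 y, hFm⟩
  | succ i ih =>
    obtain ⟨hnn, hmono⟩ := ih
    have hii : ∀ a b : ℝ, 0 ≤ a → a ≤ b → IntervalIntegrable (iterCdf F i) volume a b := by
      intro a b ha hab
      apply MonotoneOn.intervalIntegrable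
      intro s hs t ht hst
      rw [uIcc_of_le hab] at hs ht
      exact hmono (le_trans ha hs.1) (le_trans ha ht.1) hst
    constructor
    · intro y hy
      show 0 ≤ ∫ z in (0:ℝ)..y, iterCdf F i z
      apply intervalIntegral.integral_nonneg hy.out
      intro t ht
      exact hnn t ht.1
    · intro a ha b hb hab
      show (∫ z in (0:ℝ)..a, iterCdf F i z) ≤ ∫ z in (0:ℝ)..b, iterCdf F i z
      rw [← intervalIntegral.integral_add_adjacent_intervals (hii 0 a le_rfl ha.out)
        (hii a b ha.out hab)]
      have : 0 ≤ ∫ z in a..b, iterCdf F i z := by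
        apply intervalIntegral.integral_nonneg hab
        intro t ht
        exact hnn t (le_trans ha.out ht.1)
      linarith

lemma iterCdf_rep {Ω : Type*} [MeasurableSpace Ω] (P : Measure Ω) [IsProbabilityMeasure P]
    (ξ : Ω → ℝ) (hξm : Measurable ξ) (hξ0 : ∀ ω, 0 ≤ ξ ω) (i : ℕ) :
    ∀ z : ℝ, 0 ≤ z →
      ENNReal.ofReal (iterCdf (fun t => (P {ω | ξ ω ≤ t}).toReal) i z)
        = ∫⁻ ω, ENNReal.ofReal (if ξ ω ≤ z then (z - ξ ω)^i / i.factorial else 0) ∂P := by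
  set F : ℝ → ℝ := fun t => (P {ω | ξ ω ≤ t}).toReal with hF
  have hF0 : ∀ y, 0 ≤ F y := fun y => ENNReal.toReal_nonneg
  have hFm : MonotoneOn F (Ici 0) := by
    intro a _ b _ hab
    apply ENNReal.toReal_mono (measure_ne_top _ _)
    exact measure_mono (fun ω hω => le_trans hω hab)
  induction i with
  | zero =>
    intro z hz
    have hms : MeasurableSet {ω | ξ ω ≤ z} := hξm measurableSet_Iic
    have : (fun ω => ENNReal.ofReal (if ξ ω ≤ z then (z - ξ ω)^0 / Nat.factorial 0 else 0))
        = {ω | ξ ω ≤ z}.indicator (fun _ => 1) := by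
      funext ω
      by_cases h : ξ ω ≤ z <;> simp [h, indicator]
    rw [this, lintegral_indicator hms]
    simp only [lintegral_one, Measure.restrict_apply MeasurableSet.univ, univ_inter]
    show ENNReal.ofReal ((P {ω | ξ ω ≤ z}).toReal) = _
    rw [ENNReal.ofReal_toReal (measure_ne_top _ _)]
  | succ i ih =>
    intro z hz
    obtain ⟨hnn, hmono⟩ := iterCdf_mono hF0 hFm i
    have hint : IntegrableOn (iterCdf F i) (Ioc 0 z) := by
      rcases eq_or_lt_of_le hz with rfl | hz'
      · simp
      · have : IntervalIntegrable (iterCdf F i) volume 0 z := by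
          apply MonotoneOn.intervalIntegrable
          intro s hs t ht hst
          rw [uIcc_of_le hz] at hs ht
          exact hmono hs.1 ht.1 hst
        exact (intervalIntegrable_iff_integrableOn_Ioc_of_le hz).1 this
    have step1 : ENNReal.ofReal (iterCdf F (i+1) z)
        = ∫⁻ t in Ioc 0 z, ENNReal.ofReal (iterCdf F i t) := by
      show ENNReal.ofReal (∫ t in (0:ℝ)..z, iterCdf F i t) = _
      rw [intervalIntegral.integral_of_le hz]
      exact ofReal_integral_eq_lintegral_ofReal hint
        ((ae_restrict_iff' measurableSet_Ioc).2 (ae_of_all _ fun t ht => hnn t (le_of_lt ht.1)))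
    have step2 : ∫⁻ t in Ioc 0 z, ENNReal.ofReal (iterCdf F i t)
        = ∫⁻ t in Ioc 0 z, ∫⁻ ω, ENNReal.ofReal (if ξ ω ≤ t then (t - ξ ω)^i / i.factorial else 0) ∂P := by
      apply setLIntegral_congr_fun measurableSet_Ioc
      exact fun t ht => ih t (le_of_lt ht.1)
    have hswapmeas : Measurable (Function.uncurry fun (t : ℝ) (ω : Ω) =>
        ENNReal.ofReal (if ξ ω ≤ t then (t - ξ ω)^i / i.factorial else 0)) := by
      apply ENNReal.measurable_ofReal.comp
      apply Measurable.ite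
      · exact measurableSet_le (hξm.comp measurable_snd) measurable_fst
      · fun_prop
      · exact measurable_const
    have step3 : ∫⁻ t in Ioc 0 z, ∫⁻ ω, ENNReal.ofReal (if ξ ω ≤ t then (t - ξ ω)^i / i.factorial else 0) ∂P
        = ∫⁻ ω, (∫⁻ t in Ioc 0 z, ENNReal.ofReal (if ξ ω ≤ t then (t - ξ ω)^i / i.factorial else 0)) ∂P := by
      exact lintegral_lintegral_swap hswapmeas.aemeasurable
    have step4 : ∀ ω, (∫⁻ t in Ioc 0 z, ENNReal.ofReal (if ξ ω ≤ t then (t - ξ ω)^i / i.factorial else 0))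
        = ENNReal.ofReal (if ξ ω ≤ z then (z - ξ ω)^(i+1) / (i+1).factorial else 0) := by
      intro ω
      set a := ξ ω with ha
      by_cases hc : a ≤ z
      · have ha0 : 0 ≤ a := hξ0 ω
        have hcont : Continuous (fun t : ℝ => (t - a)^i / i.factorial) := by fun_prop
        have heqind : (fun t => if a ≤ t then (t - a)^i / i.factorial else 0)
            = (Ici a).indicator (fun t : ℝ => (t - a)^i / i.factorial) := by
          funext t; by_cases h : a ≤ t <;> simp [h, indicator]
        have hIc : ∀ u v : ℝ, u ≤ v → IntervalIntegrable
            (fun t => if a ≤ t then (t - a)^i / i.factorial else 0) volume u v := by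
          intro u v huv
          rw [intervalIntegrable_iff_integrableOn_Ioc_of_le huv, heqind]
          exact ((hcont.integrableOn_Icc (a := u) (b := v)).mono_set Ioc_subset_Icc_self).indicator
            measurableSet_Ici
        have hintg : IntegrableOn (fun t => if a ≤ t then (t - a)^i / i.factorial else 0) (Ioc 0 z) :=
          (intervalIntegrable_iff_integrableOn_Ioc_of_le hz).1 (hIc 0 z hz)
        have hnn' : 0 ≤ᵐ[volume.restrict (Ioc 0 z)]
            (fun t => if a ≤ t then (t - a)^i / i.factorial else 0) := by
          refine ae_of_all _ fun t => ?_
          by_cases h : a ≤ t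
          · simp only [h, if_true]
            have : 0 ≤ t - a := by linarith
            positivity
          · simp [h]
        rw [← ofReal_integral_eq_lintegral_ofReal hintg hnn']
        congr 1
        rw [← intervalIntegral.integral_of_le hz]
        have hsplit : ∫ t in (0:ℝ)..z, (if a ≤ t then (t - a)^i / i.factorial else 0)
            = (∫ t in (0:ℝ)..a, (if a ≤ t then (t - a)^i / i.factorial else 0))
              + ∫ t in a..z, (if a ≤ t then (t - a)^i / i.factorial else 0) :=
          (intervalIntegral.integral_add_adjacent_intervals (hIc 0 a ha0) (hIc a z hc)).symm
        have hfirst : (∫ t in (0:ℝ)..a, (if a ≤ t then (t - a)^i / i.factorial else 0)) = 0 := by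
          rw [intervalIntegral.integral_of_le ha0, MeasureTheory.integral_Ioc_eq_integral_Ioo]
          rw [setIntegral_congr_fun measurableSet_Ioo
            (fun t ht => by simp [not_le.2 ht.2] : EqOn _ (fun _ => (0:ℝ)) (Ioo 0 a))]
          simp
        have hsecond : (∫ t in a..z, (if a ≤ t then (t - a)^i / i.factorial else 0))
            = (z - a)^(i+1) / (i+1).factorial := by
          rw [intervalIntegral.integral_congr
            (fun t ht => by rw [uIcc_of_le hc] at ht; simp [ht.1] :
              EqOn _ (fun t => (t - a)^i / i.factorial) (uIcc a z))]
          exact polyInt1 i a z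
        rw [hsplit, hfirst, hsecond, if_pos hc]
        ring
      · have : ∀ t ∈ Ioc (0:ℝ) z, (if a ≤ t then (t - a)^i / i.factorial else 0) = 0 := by
          intro t ht
          have : ¬ a ≤ t := fun h => hc (le_trans h ht.2)
          simp [this]
        rw [setLIntegral_congr_fun (f := fun t => ENNReal.ofReal (if a ≤ t then (t - a)^i / i.factorial else 0)) (g := fun _ => ENNReal.ofReal 0) measurableSet_Ioc (fun t ht => by beta_reduce; rw [this t ht])]
        simp [hc]
    rw [step1, step2, step3]
    exact lintegral_congr fun ω => step4 ω

/-- Fix `n ≥ 2`, let `ξ ≥ 0` be a random variable with cdf `F`, and let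
`W ∈ 𝒟(n)` (with pointwise derivatives `d 1, …, d n` on `(0,∞)`, `(−1)^k W^(k) ≥ 0` for
`k = 1, …, n`, `W'(∞) = 0`, and `W` extended to `0` by its right limit) be bounded from
below with `W(y) → 0` as `y → ∞`.  Then
`E[W(ξ)] = ∫₀^∞ (−1)^n W^{(n)}(y) F_n(y) dy`, both sides valued in `[0, ∞]`. -/
theorem stmt1 {Ω : Type*} [MeasurableSpace Ω] (P : Measure Ω) [IsProbabilityMeasure P]
    (ξ : Ω → ℝ) (hξm : Measurable ξ) (hξ0 : ∀ ω, 0 ≤ ξ ω)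
    (n : ℕ) (hn : 2 ≤ n)
    (W : ℝ → ℝ) (d : ℕ → ℝ → ℝ)
    (hd0 : d 0 = W)
    (hderiv : ∀ k < n, ∀ y > (0:ℝ), HasDerivAt (d k) (d (k + 1) y) y)
    (hsign : ∀ k, 1 ≤ k → k ≤ n → ∀ y > (0:ℝ), 0 ≤ (-1 : ℝ) ^ k * d k y)
    (hlim : Filter.Tendsto (d 1) Filter.atTop (nhds 0))
    (hW0 : Filter.Tendsto W (nhdsWithin 0 (Set.Ioi 0)) (nhds (W 0)))
    (hbdd : ∃ m : ℝ, ∀ y > (0:ℝ), m ≤ W y)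
    (hWinf : Filter.Tendsto W Filter.atTop (nhds 0)) :
    ∫⁻ ω, ENNReal.ofReal (W (ξ ω)) ∂P
      = ∫⁻ y in Set.Ioi (0:ℝ),
          ENNReal.ofReal ((-1 : ℝ) ^ n * d n y
            * iterCdf (fun t => (P {ω | ξ ω ≤ t}).toReal) (n - 1) y) := by
  classical
  set F : ℝ → ℝ := fun t => (P {ω | ξ ω ≤ t}).toReal with hFdef
  set c : ℕ → ℝ → ℝ := fun k y => (-1:ℝ)^k * d k y with hc
  have hc_deriv : ∀ k, k < n → ∀ y > (0:ℝ), HasDerivAt (c k) (-(c (k+1) y)) y := by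
    intro k hk y hy
    have := (hderiv k hk y hy).const_mul ((-1:ℝ)^k)
    have heq : (-1:ℝ)^k * d (k+1) y = -(c (k+1) y) := by
      simp only [hc, pow_succ]; ring
    rw [heq] at this
    exact this
  have hc_nonneg : ∀ k, 1 ≤ k → k ≤ n → ∀ y > (0:ℝ), 0 ≤ c k y := hsign
  have hc0W : ∀ y, c 0 y = W y := by intro y; simp [hc, hd0]
  have hcWlim : Tendsto (c 0) atTop (𝓝 0) := by
    have : c 0 = W := funext hc0W
    rw [this]; exact hWinf
  -- limits of intermediate derivatives
  have hclim : ∀ k, 1 ≤ k → k ≤ n - 1 → Tendsto (c k) atTop (𝓝 0) := by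
    intro k hk1
    induction k, hk1 using Nat.le_induction with
    | base =>
      intro _
      have : c 1 = fun y => -(d 1 y) := by funext y; simp [hc]
      rw [this]
      simpa using hlim.neg
    | succ k hk1 ih =>
      intro hk
      have hklt : k ≤ n - 1 := by omega
      refine tendsto_next (u := c k) (v := c (k+1)) (w := c (k+2))
        (fun y hy => hc_deriv k (by omega) y hy)
        (fun y hy => hc_deriv (k+1) (by omega) y hy)
        (fun y hy => hc_nonneg (k+1) (by omega) (by omega) y hy)
        (fun y hy => hc_nonneg (k+2) (by omega) (by omega) y hy)
        (ih hklt)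
  have hclim' : ∀ k, k ≤ n - 1 → Tendsto (c k) atTop (𝓝 0) := by
    intro k hk
    rcases Nat.eq_zero_or_pos k with rfl | hk0
    · exact hcWlim
    · exact hclim k hk0 hk
  -- the measurable version of (-1)^n dⁿ
  set G' : ℝ → ℝ≥0∞ := fun z =>
    (Ioi (0:ℝ)).indicator (fun z => ENNReal.ofReal ((-1:ℝ)^n * deriv (d (n-1)) z)) z with hG'
  have hG'meas : Measurable G' := by
    apply Measurable.indicator _ measurableSet_Ioi
    exact ENNReal.measurable_ofReal.comp ((measurable_deriv _).const_mul _)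
  have hn1 : n - 1 + 1 = n := by omega
  have hG'eq : ∀ z, 0 < z → G' z = ENNReal.ofReal (c n z) := by
    intro z hz
    have hd : deriv (d (n-1)) z = d n z := by
      have := hderiv (n-1) (by omega) z hz
      rw [hn1] at this
      exact this.deriv
    simp only [hG', indicator_of_mem (mem_Ioi.2 hz), hd]
    rfl
  -- single FTC step in ℝ≥0∞ form
  have hftc : ∀ k, k < n → k ≤ n - 1 → ∀ x > (0:ℝ),
      ENNReal.ofReal (c k x) = ∫⁻ y in Ioi x, ENNReal.ofReal (c (k+1) y) := by
    intro k hkn hk x hx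
    have := lint_ftc (f := fun y => -(c k y)) (f' := c (k+1))
      (fun y hy => by have := (hc_deriv k hkn y hy).neg; rw [neg_neg] at this; exact this)
      (fun y hy => hc_nonneg (k+1) (by omega) (by omega) y hy)
      (by simpa using (hclim' k hk).neg) hx
    rw [this]
    norm_num
  -- main representation, by induction
  have hrep : ∀ j : ℕ, j ≤ n - 1 → ∀ x > (0:ℝ),
      ENNReal.ofReal (c (n-1-j) x)
        = ∫⁻ z in Ioi x, ENNReal.ofReal ((z-x)^j / j.factorial) * G' z := by
    intro j
    induction j with
    | zero =>
      intro _ x hx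
      have h1 : ∫⁻ z in Ioi x, ENNReal.ofReal ((z-x)^0 / Nat.factorial 0) * G' z
          = ∫⁻ z in Ioi x, ENNReal.ofReal (c n z) := by
        apply setLIntegral_congr_fun measurableSet_Ioi
        intro z hz
        beta_reduce
        rw [hG'eq z (lt_trans hx hz)]
        simp
      rw [h1]
      simp only [Nat.sub_zero]
      exact hftc (n-1) (by omega) le_rfl x hx |>.trans
        (by rw [hn1])
    | succ j ih =>
      intro hj x hx
      have hjn : j ≤ n - 1 := by omega
      have hidx : n - 1 - (j+1) + 1 = n - 1 - j := by omega
      have step1 : ENNReal.ofReal (c (n-1-(j+1)) x)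
          = ∫⁻ y in Ioi x, ENNReal.ofReal (c (n-1-j) y) := by
        have := hftc (n-1-(j+1)) (by omega) (by omega) x hx
        rw [hidx] at this
        exact this
      have step2 : ∫⁻ y in Ioi x, ENNReal.ofReal (c (n-1-j) y)
          = ∫⁻ y in Ioi x, ∫⁻ z in Ioi y, ENNReal.ofReal ((z-y)^j / j.factorial) * G' z := by
        apply setLIntegral_congr_fun measurableSet_Ioi
        exact fun y hy => ih hjn y (lt_trans hx hy)
      rw [step1, step2, tonelli_step G' hG'meas j x]
  -- representation with `if`, valid for all x ≥ 0
  set J : ℝ → ℝ → ℝ≥0∞ := fun x z =>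
    ENNReal.ofReal (if x < z then (z-x)^(n-1) / (n-1).factorial else 0) * G' z with hJ
  have hJpos : ∀ x > (0:ℝ), ENNReal.ofReal (W x) = ∫⁻ z, J x z := by
    intro x hx
    have h0 : ENNReal.ofReal (c 0 x)
        = ∫⁻ z in Ioi x, ENNReal.ofReal ((z-x)^(n-1) / (n-1).factorial) * G' z := by
      have := hrep (n-1) le_rfl x hx
      rwa [Nat.sub_self] at this
    rw [← hc0W x, h0, ← lintegral_indicator measurableSet_Ioi]
    refine lintegral_congr fun z => ?_
    by_cases hz : x < z
    · rw [indicator_of_mem (mem_Ioi.2 hz), hJ]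
      simp [hz]
    · rw [indicator_of_notMem (show z ∉ Ioi x from fun h => hz h), hJ]
      simp [hz]
  -- monotone sequence x_i = 1/(i+1) ↓ 0
  have hJmeasu : ∀ (x : ℝ), Measurable (fun z => J x z) := by
    intro x
    apply Measurable.mul _ hG'meas
    apply ENNReal.measurable_ofReal.comp
    exact Measurable.ite (measurableSet_lt measurable_const measurable_id)
      (by fun_prop) measurable_const
  have hfne : ((n-1).factorial : ℝ) ≠ 0 := by positivity
  have hJ0 : ENNReal.ofReal (W 0) = ∫⁻ z, J 0 z := by
    set u : ℕ → ℝ := fun i => 1 / (i + 1) with hu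
    have hu_pos : ∀ i, 0 < u i := fun i => by positivity
    have hu_anti : ∀ i i' : ℕ, i ≤ i' → u i' ≤ u i := by
      intro i i' h
      apply one_div_le_one_div_of_le (by positivity)
      have : (i:ℝ) ≤ (i':ℝ) := Nat.cast_le.2 h
      linarith
    have hu_lim : Tendsto u atTop (𝓝 0) := tendsto_one_div_add_atTop_nhds_zero_nat
    have hmono : Monotone (fun i => fun z => J (u i) z) := by
      intro i i' h z
      rw [hJ]
      simp only
      by_cases hiz : u i < z
      · have hiz' : u i' < z := lt_of_le_of_lt (hu_anti i i' h) hiz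
        rw [if_pos hiz, if_pos hiz']
        apply mul_le_mul_left
        apply ENNReal.ofReal_le_ofReal
        have h1 : 0 ≤ z - u i := by linarith
        have h2 : u i' ≤ u i := hu_anti i i' h
        gcongr
      · rw [if_neg hiz]
        simp
    have hsup : ∀ z, (⨆ i, J (u i) z) = J 0 z := by
      intro z
      by_cases hz : 0 < z
      · have hev : ∀ᶠ i in atTop, u i < z := hu_lim.eventually (gt_mem_nhds hz)
        have htend : Tendsto (fun i => J (u i) z) atTop (𝓝 (J 0 z)) := by
          have h1 : Tendsto (fun i => ENNReal.ofReal ((z - u i)^(n-1)/(n-1).factorial))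
              atTop (𝓝 (ENNReal.ofReal ((z - 0)^(n-1)/(n-1).factorial))) := by
            apply ENNReal.tendsto_ofReal
            apply Tendsto.div_const
            exact (tendsto_const_nhds.sub hu_lim).pow _
          have hne : G' z ≠ ⊤ := by
            simp only [hG']
            by_cases h : z ∈ Ioi (0:ℝ)
            · rw [indicator_of_mem h]; exact ENNReal.ofReal_ne_top
            · rw [indicator_of_notMem h]; exact ENNReal.zero_ne_top
          have h2 := ENNReal.Tendsto.mul_const h1 (Or.inr hne)
          have hJ0z : J 0 z = ENNReal.ofReal ((z - 0)^(n-1)/(n-1).factorial) * G' z := by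
            rw [hJ]; simp only [if_pos hz]
          rw [hJ0z]
          apply Tendsto.congr' _ h2
          filter_upwards [hev] with i hi
          rw [hJ]; simp only [if_pos hi]
        exact tendsto_nhds_unique (tendsto_atTop_iSup (fun i i' h => hmono h z)) htend
      · have h0 : ∀ i, J (u i) z = 0 := by
          intro i
          have : ¬ u i < z := fun h => hz (lt_trans (hu_pos i) h)
          rw [hJ]; simp [this]
        have h0' : J 0 z = 0 := by rw [hJ]; simp [hz]
        simp [h0, h0']
    have hlhs : ∫⁻ z, J 0 z = ⨆ i, ∫⁻ z, J (u i) z := by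
      rw [← lintegral_iSup (fun i => hJmeasu (u i)) hmono]
      exact lintegral_congr fun z => (hsup z).symm
    have hWmono : Monotone (fun i => ENNReal.ofReal (W (u i))) := by
      intro i i' h
      show ENNReal.ofReal (W (u i)) ≤ ENNReal.ofReal (W (u i'))
      rw [hJpos (u i) (hu_pos i), hJpos (u i') (hu_pos i')]
      exact lintegral_mono fun z => hmono h z
    have hWtend : Tendsto (fun i => ENNReal.ofReal (W (u i))) atTop (𝓝 (ENNReal.ofReal (W 0))) := by
      apply ENNReal.tendsto_ofReal
      apply hW0.comp
      rw [tendsto_nhdsWithin_iff]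
      exact ⟨hu_lim, Eventually.of_forall fun i => mem_Ioi.2 (hu_pos i)⟩
    have : (⨆ i, ENNReal.ofReal (W (u i))) = ENNReal.ofReal (W 0) :=
      tendsto_nhds_unique (tendsto_atTop_iSup hWmono) hWtend
    rw [hlhs, ← this]
    exact iSup_congr fun i => hJpos (u i) (hu_pos i)
  have hall : ∀ x, 0 ≤ x → ENNReal.ofReal (W x) = ∫⁻ z, J x z := by
    intro x hx
    rcases hx.eq_or_lt with rfl | h
    · exact hJ0
    · exact hJpos x h
  -- swap the expectation and the z-integral
  have hswap2meas : Measurable (Function.uncurry fun (ω : Ω) (z : ℝ) => J (ξ ω) z) := by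
    apply Measurable.mul
    · apply ENNReal.measurable_ofReal.comp
      apply Measurable.ite
      · exact measurableSet_lt (hξm.comp measurable_fst) measurable_snd
      · exact ((measurable_snd.sub (hξm.comp measurable_fst)).pow_const _).div_const _
      · exact measurable_const
    · exact hG'meas.comp measurable_snd
  have hinnermeas : ∀ z : ℝ, Measurable (fun ω =>
      ENNReal.ofReal (if ξ ω < z then (z - ξ ω)^(n-1) / (n-1).factorial else 0)) := by
    intro z
    apply ENNReal.measurable_ofReal.comp
    apply Measurable.ite
    · exact measurableSet_lt hξm measurable_const
    · exact ((measurable_const.sub hξm).pow_const _).div_const _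
    · exact measurable_const
  have hinner : ∀ z : ℝ, 0 < z →
      (∫⁻ ω, ENNReal.ofReal (if ξ ω < z then (z - ξ ω)^(n-1) / (n-1).factorial else 0) ∂P)
        = ENNReal.ofReal (iterCdf F (n-1) z) := by
    intro z hz
    rw [iterCdf_rep P ξ hξm hξ0 (n-1) z hz.le]
    refine lintegral_congr fun ω => ?_
    rcases lt_trichotomy (ξ ω) z with h | h | h
    · rw [if_pos h, if_pos h.le]
    · rw [if_neg (by rw [h]; exact lt_irrefl z), if_pos h.le, h]
      simp [zero_pow (show n - 1 ≠ 0 by omega)]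
    · rw [if_neg (not_lt.2 h.le), if_neg (not_le.2 h)]
  have hF0 : ∀ y, 0 ≤ F y := fun y => ENNReal.toReal_nonneg
  have hFm : MonotoneOn F (Ici 0) := by
    intro a _ b _ hab
    apply ENNReal.toReal_mono (measure_ne_top _ _)
    exact measure_mono (fun ω hω => le_trans hω hab)
  calc ∫⁻ ω, ENNReal.ofReal (W (ξ ω)) ∂P
      = ∫⁻ ω, (∫⁻ z, J (ξ ω) z) ∂P := lintegral_congr fun ω => hall (ξ ω) (hξ0 ω)
    _ = ∫⁻ z, ∫⁻ ω, J (ξ ω) z ∂P := lintegral_lintegral_swap hswap2meas.aemeasurable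
    _ = ∫⁻ z, (Ioi (0:ℝ)).indicator
          (fun z => ENNReal.ofReal ((-1:ℝ)^n * d n z * iterCdf F (n-1) z)) z := by
        refine lintegral_congr fun z => ?_
        have hmul : ∫⁻ ω, J (ξ ω) z ∂P
            = (∫⁻ ω, ENNReal.ofReal (if ξ ω < z then (z - ξ ω)^(n-1) / (n-1).factorial else 0) ∂P)
              * G' z := by
          rw [hJ]
          exact lintegral_mul_const _ (hinnermeas z)
        rw [hmul]
        by_cases hz : 0 < z
        · rw [indicator_of_mem (mem_Ioi.2 hz), hinner z hz, hG'eq z hz]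
          have hiter : 0 ≤ iterCdf F (n-1) z := (iterCdf_mono hF0 hFm (n-1)).1 z hz.le
          rw [← ENNReal.ofReal_mul hiter]
          congr 1
          simp only [hc]
          ring
        · rw [indicator_of_notMem (show z ∉ Ioi (0:ℝ) from fun h => hz h)]
          have : G' z = 0 := by
            simp only [hG']
            rw [indicator_of_notMem (show z ∉ Ioi (0:ℝ) from fun h => hz h)]
          rw [this, mul_zero]
    _ = ∫⁻ y in Set.Ioi (0:ℝ),
          ENNReal.ofReal ((-1 : ℝ) ^ n * d n y * iterCdf F (n - 1) y) := by
        rw [lintegral_indicator measurableSet_Ioi]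
end

section
/- Fix an integer n ≥ 1 and let ξ and η be nonnegative random variables. If ξ ⪰_n η, then ξ ⪰_∞ η; that is, if F_{ξ,n}(y) ≤ F_{η,n}(y) for all y ≥ 0, then E[e^{−zξ}] ≤ E[e^{−zη}] for every z > 0. -/
open MeasureTheory Filter Set Topology ENNReal

lemma iterCdf_intervalIntegrable {F : ℝ → ℝ} (hF : Monotone F) :
    ∀ (i : ℕ) (a b : ℝ), IntervalIntegrable (iterCdf F i) volume a b := by
  intro i
  induction i with
  | zero => exact fun a b => hF.intervalIntegrable
  | succ i ih =>
    have hc : Continuous (fun y => ∫ z in (0:ℝ)..y, iterCdf F i z) :=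
      intervalIntegral.continuous_primitive (fun a b => ih a b) 0
    exact fun a b => (hc.intervalIntegrable a b)

lemma iterCdf_measurable {F : ℝ → ℝ} (hF : Monotone F) (i : ℕ) :
    Measurable (iterCdf F i) := by
  cases i with
  | zero => exact hF.measurable
  | succ i =>
    have hc : Continuous (fun y => ∫ z in (0:ℝ)..y, iterCdf F i z) :=
      intervalIntegral.continuous_primitive
        (fun a b => iterCdf_intervalIntegrable hF i a b) 0
    exact hc.measurable

lemma iterCdf_nonneg {F : ℝ → ℝ} (hF0 : ∀ t, 0 ≤ F t) :
    ∀ i, ∀ y : ℝ, 0 ≤ y → 0 ≤ iterCdf F i y := by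
  intro i
  induction i with
  | zero => exact fun y _ => hF0 y
  | succ i ih =>
    intro y hy
    show 0 ≤ ∫ z in (0:ℝ)..y, iterCdf F i z
    exact intervalIntegral.integral_nonneg hy (fun u hu => ih u hu.1)

lemma ofReal_iterCdf_succ {F : ℝ → ℝ} (hF : Monotone F) (hF0 : ∀ t, 0 ≤ F t)
    (i : ℕ) {y : ℝ} (hy : 0 ≤ y) :
    ENNReal.ofReal (iterCdf F (i+1) y)
      = ∫⁻ t in Ioc 0 y, ENNReal.ofReal (iterCdf F i t) := by
  have hInt : IntegrableOn (iterCdf F i) (Ioc 0 y) volume :=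
    (iterCdf_intervalIntegrable hF i 0 y).1
  show ENNReal.ofReal (∫ z in (0:ℝ)..y, iterCdf F i z) = _
  rw [intervalIntegral.integral_of_le hy]
  exact ofReal_integral_eq_lintegral_ofReal hInt
    ((ae_restrict_iff' measurableSet_Ioc).2
      (ae_of_all _ fun t ht => iterCdf_nonneg hF0 i t ht.1.le))

lemma expInt {z : ℝ} (hz : 0 < z) (t : ℝ) :
    IntegrableOn (fun y => Real.exp (-(z * y))) (Ioi t) := by
  simpa [neg_mul] using exp_neg_integrableOn_Ioi t hz

lemma integral_exp_neg_mul_Ioi {z : ℝ} (hz : 0 < z) (t : ℝ) :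
    ∫ y in Ioi t, Real.exp (-(z * y)) = Real.exp (-(z * t)) / z := by
  have hderiv : ∀ x ∈ Ici t,
      HasDerivAt (fun y => -Real.exp (-(z * y)) / z) (Real.exp (-(z * x))) x := by
    intro x _
    have h1 : HasDerivAt (fun y : ℝ => -(z * y)) (-z) x := by
      simpa using (hasDerivAt_id x).const_mul (-z)
    have h2 := (h1.exp).neg.div_const z
    have h3 : -(Real.exp (-(z * x)) * -z) / z = Real.exp (-(z * x)) := by
      field_simp
    rw [h3] at h2
    exact h2
  have htend : Tendsto (fun y => -Real.exp (-(z * y)) / z) atTop (𝓝 0) := by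
    have h1 : Tendsto (fun y : ℝ => z * y) atTop atTop :=
      Tendsto.const_mul_atTop hz tendsto_id
    have h2 : Tendsto (fun y : ℝ => Real.exp (-(z * y))) atTop (𝓝 0) :=
      (Real.tendsto_exp_neg_atTop_nhds_zero).comp h1
    have := (h2.neg).div_const z
    simpa using this
  have := integral_Ioi_of_hasDerivAt_of_tendsto' hderiv (expInt hz t) htend
  rw [this]; ring

lemma lint_exp {z : ℝ} (hz : 0 < z) (t : ℝ) :
    ∫⁻ y in Ioi t, ENNReal.ofReal (Real.exp (-(z * y)))
      = ENNReal.ofReal (Real.exp (-(z * t)) / z) := by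
  rw [← integral_exp_neg_mul_Ioi hz t]
  exact (ofReal_integral_eq_lintegral_ofReal (expInt hz t)
    (ae_of_all _ fun y => (Real.exp_pos _).le)).symm

lemma key_step {z : ℝ} (hz : 0 < z) {F : ℝ → ℝ} (hF : Monotone F) (hF0 : ∀ t, 0 ≤ F t) (i : ℕ) :
    ∫⁻ y in Ioi 0, ENNReal.ofReal (Real.exp (-(z * y))) * ENNReal.ofReal (iterCdf F i y)
      = ENNReal.ofReal z *
        ∫⁻ y in Ioi 0,
          ENNReal.ofReal (Real.exp (-(z * y))) * ENNReal.ofReal (iterCdf F (i+1) y) := by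
  set g : ℝ → ℝ≥0∞ := fun y => ENNReal.ofReal (Real.exp (-(z * y))) with hg
  set h : ℝ → ℝ≥0∞ := fun t => ENNReal.ofReal (iterCdf F i t) with hh
  have hgm : Measurable g :=
    (Real.continuous_exp.comp (continuous_const.mul continuous_id).neg).measurable.ennreal_ofReal
  have hhm : Measurable h := (iterCdf_measurable hF i).ennreal_ofReal
  set f : ℝ → ℝ → ℝ≥0∞ := fun y t => Set.indicator (Iic y) (fun t => g y * h t) t with hf
  have hfmeas : Measurable (Function.uncurry f) := by
    have hWQ : Function.uncurry f =
        Set.indicator {p : ℝ × ℝ | p.2 ≤ p.1} (fun p => g p.1 * h p.2) := by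
      funext p
      simp only [Function.uncurry, hf, Set.indicator, mem_Iic, mem_setOf_eq]
    rw [hWQ]
    exact ((hgm.comp measurable_fst).mul (hhm.comp measurable_snd)).indicator
      (measurableSet_le measurable_snd measurable_fst)
  have swap := lintegral_lintegral_swap (μ := volume.restrict (Ioi 0))
      (ν := volume.restrict (Ioi 0)) hfmeas.aemeasurable
  have inner1 : ∀ y ∈ Ioi (0:ℝ),
      ∫⁻ t in Ioi 0, f y t = g y * ENNReal.ofReal (iterCdf F (i+1) y) := by
    intro y hy
    rw [hf]
    rw [lintegral_indicator measurableSet_Iic,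
      Measure.restrict_restrict measurableSet_Iic, inter_comm, Ioi_inter_Iic,
      lintegral_const_mul _ hhm, ofReal_iterCdf_succ hF hF0 i (le_of_lt hy)]
  have inner2 : ∀ t ∈ Ioi (0:ℝ),
      ∫⁻ y in Ioi 0, f y t = ENNReal.ofReal (Real.exp (-(z * t)) / z) * h t := by
    intro t ht
    have hpt : ∀ y, f y t = (Ici t).indicator (fun y => g y * h t) y := by
      intro y
      simp only [hf, Set.indicator, mem_Iic, mem_Ici]
    calc ∫⁻ y in Ioi 0, f y t
        = ∫⁻ y in Ioi 0, (Ici t).indicator (fun y => g y * h t) y := by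
          exact lintegral_congr fun y => hpt y
      _ = ∫⁻ y in Ici t ∩ Ioi 0, g y * h t := by
          rw [lintegral_indicator measurableSet_Ici,
            Measure.restrict_restrict measurableSet_Ici]
      _ = ∫⁻ y in Ioi t, g y * h t := by
          have hset : Ici t ∩ Ioi 0 = Ici t :=
            inter_eq_left.2 fun y hy => lt_of_lt_of_le ht.out hy
          rw [hset, ← Measure.restrict_congr_set Ioi_ae_eq_Ici]
      _ = (∫⁻ y in Ioi t, g y) * h t := lintegral_mul_const _ hgm
      _ = ENNReal.ofReal (Real.exp (-(z * t)) / z) * h t := by rw [lint_exp hz t]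
  symm
  calc ENNReal.ofReal z * ∫⁻ y in Ioi 0, g y * ENNReal.ofReal (iterCdf F (i+1) y)
      = ENNReal.ofReal z * ∫⁻ y in Ioi 0, ∫⁻ t in Ioi 0, f y t := by
        rw [setLIntegral_congr_fun measurableSet_Ioi inner1]
    _ = ENNReal.ofReal z * ∫⁻ t in Ioi 0, ∫⁻ y in Ioi 0, f y t := by rw [swap]
    _ = ENNReal.ofReal z *
        ∫⁻ t in Ioi 0, ENNReal.ofReal (Real.exp (-(z * t)) / z) * h t := by
        rw [setLIntegral_congr_fun measurableSet_Ioi inner2]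
    _ = ∫⁻ t in Ioi 0, ENNReal.ofReal z * (ENNReal.ofReal (Real.exp (-(z * t)) / z) * h t) := by
        rw [lintegral_const_mul' _ _ ENNReal.ofReal_ne_top]
    _ = ∫⁻ t in Ioi 0, g t * h t := by
        apply lintegral_congr
        intro t
        rw [← mul_assoc, ← ENNReal.ofReal_mul hz.le]
        congr 2
        field_simp

lemma key_chain {z : ℝ} (hz : 0 < z) {F : ℝ → ℝ} (hF : Monotone F) (hF0 : ∀ t, 0 ≤ F t) (m : ℕ) :
    ∫⁻ y in Ioi 0, ENNReal.ofReal (Real.exp (-(z * y))) * ENNReal.ofReal (iterCdf F 0 y)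
      = ENNReal.ofReal z ^ m *
        ∫⁻ y in Ioi 0,
          ENNReal.ofReal (Real.exp (-(z * y))) * ENNReal.ofReal (iterCdf F m y) := by
  induction m with
  | zero => simp
  | succ m ih =>
    rw [ih, key_step hz hF hF0 m, pow_succ, mul_assoc]

lemma laplace_eq {Ω : Type*} [MeasurableSpace Ω] (P : Measure Ω) [IsProbabilityMeasure P]
    {z : ℝ} (hz : 0 < z) {ξ : Ω → ℝ} (hξm : Measurable ξ) (hξ0 : ∀ ω, 0 ≤ ξ ω) :
    ∫⁻ ω, ENNReal.ofReal (Real.exp (-(z * ξ ω))) ∂P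
      = ENNReal.ofReal z *
        ∫⁻ y in Ioi 0, ENNReal.ofReal (Real.exp (-(z * y))) * P {ω | ξ ω ≤ y} := by
  set g : ℝ → ℝ≥0∞ := fun y => ENNReal.ofReal (Real.exp (-(z * y))) with hg
  have hgm : Measurable g :=
    (Real.continuous_exp.comp (continuous_const.mul continuous_id).neg).measurable.ennreal_ofReal
  set f : ℝ → Ω → ℝ≥0∞ := fun y ω => Set.indicator {ω | ξ ω ≤ y} (fun _ => g y) ω with hf
  have hfmeas : Measurable (Function.uncurry f) := by
    have hWQ : Function.uncurry f =
        Set.indicator {p : ℝ × Ω | ξ p.2 ≤ p.1} (fun p => g p.1) := by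
      funext p
      simp only [Function.uncurry, hf, Set.indicator, mem_setOf_eq]
    rw [hWQ]
    exact (hgm.comp measurable_fst).indicator
      (measurableSet_le (hξm.comp measurable_snd) measurable_fst)
  have swap := lintegral_lintegral_swap (μ := volume.restrict (Ioi 0)) (ν := P)
    hfmeas.aemeasurable
  have inner1 : ∀ y : ℝ, ∫⁻ ω, f y ω ∂P = g y * P {ω | ξ ω ≤ y} := by
    intro y
    exact lintegral_indicator_const (hξm measurableSet_Iic) (g y)
  have inner2 : ∀ ω, ∫⁻ y in Ioi 0, f y ω = ENNReal.ofReal (Real.exp (-(z * ξ ω)) / z) := by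
    intro ω
    have hpt : ∀ y, f y ω = (Ici (ξ ω)).indicator g y := by
      intro y
      simp only [hf, Set.indicator, mem_setOf_eq, mem_Ici]
    have hne : ∀ᵐ y : ℝ, y ≠ ξ ω := by
      rw [ae_iff]
      simp only [ne_eq, not_not, setOf_eq_eq_singleton]
      exact measure_singleton _
    have hsets : (Ici (ξ ω) ∩ Ioi 0 : Set ℝ) =ᵐ[volume] Ioi (ξ ω) := by
      refine hne.mono fun y hy => ?_
      show (y ∈ Ici (ξ ω) ∩ Ioi 0) = (y ∈ Ioi (ξ ω))
      simp only [mem_inter_iff, mem_Ici, mem_Ioi, eq_iff_iff]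
      constructor
      · rintro ⟨h1, _⟩
        exact lt_of_le_of_ne h1 (Ne.symm hy)
      · intro h1
        exact ⟨h1.le, lt_of_le_of_lt (hξ0 ω) h1⟩
    calc ∫⁻ y in Ioi 0, f y ω
        = ∫⁻ y in Ioi 0, (Ici (ξ ω)).indicator g y := lintegral_congr fun y => hpt y
      _ = ∫⁻ y in Ici (ξ ω) ∩ Ioi 0, g y := by
          rw [lintegral_indicator measurableSet_Ici,
            Measure.restrict_restrict measurableSet_Ici]
      _ = ∫⁻ y in Ioi (ξ ω), g y := by rw [Measure.restrict_congr_set hsets]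
      _ = ENNReal.ofReal (Real.exp (-(z * ξ ω)) / z) := lint_exp hz _
  symm
  calc ENNReal.ofReal z * ∫⁻ y in Ioi 0, g y * P {ω | ξ ω ≤ y}
      = ENNReal.ofReal z * ∫⁻ y in Ioi 0, ∫⁻ ω, f y ω ∂P := by
        rw [lintegral_congr fun y => (inner1 y).symm]
    _ = ENNReal.ofReal z * ∫⁻ ω, (∫⁻ y in Ioi 0, f y ω) ∂P := by rw [swap]
    _ = ENNReal.ofReal z * ∫⁻ ω, ENNReal.ofReal (Real.exp (-(z * ξ ω)) / z) ∂P := by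
        rw [lintegral_congr fun ω => inner2 ω]
    _ = ∫⁻ ω, ENNReal.ofReal z * ENNReal.ofReal (Real.exp (-(z * ξ ω)) / z) ∂P := by
        rw [lintegral_const_mul' _ _ ENNReal.ofReal_ne_top]
    _ = ∫⁻ ω, ENNReal.ofReal (Real.exp (-(z * ξ ω))) ∂P := by
        apply lintegral_congr
        intro ω
        rw [← ENNReal.ofReal_mul hz.le]
        congr 1
        field_simp

/-- Fix `n ≥ 1` and nonnegative random variables `ξ, η`.  If `ξ ⪰ₙ η`,
i.e. `F_{ξ,n}(y) ≤ F_{η,n}(y)` for all `y ≥ 0`, then `ξ ⪰_∞ η`, i.e.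
`E[e^{−zξ}] ≤ E[e^{−zη}]` for every `z > 0`. -/
theorem stmt4 {Ω : Type*} [MeasurableSpace Ω] (P : Measure Ω) [IsProbabilityMeasure P]
    (ξ η : Ω → ℝ) (hξm : Measurable ξ) (hηm : Measurable η)
    (hξ0 : ∀ ω, 0 ≤ ξ ω) (hη0 : ∀ ω, 0 ≤ η ω)
    (n : ℕ) (hn : 1 ≤ n)
    (hdom : ∀ y ≥ (0:ℝ),
      iterCdf (fun t => (P {ω | ξ ω ≤ t}).toReal) (n - 1) y
        ≤ iterCdf (fun t => (P {ω | η ω ≤ t}).toReal) (n - 1) y) :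
    ∀ z > (0:ℝ),
      ∫ ω, Real.exp (-(z * ξ ω)) ∂P ≤ ∫ ω, Real.exp (-(z * η ω)) ∂P := by
  intro z hz
  set Fξ : ℝ → ℝ := fun t => (P {ω | ξ ω ≤ t}).toReal with hFξdef
  set Fη : ℝ → ℝ := fun t => (P {ω | η ω ≤ t}).toReal with hFηdef
  have hFmono : ∀ (θ : Ω → ℝ), Monotone (fun t => (P {ω | θ ω ≤ t}).toReal) := by
    intro θ a b hab
    exact ENNReal.toReal_mono (measure_ne_top P _)
      (measure_mono fun ω hω => le_trans hω hab)
  have hF0 : ∀ (θ : Ω → ℝ) (t : ℝ), 0 ≤ (P {ω | θ ω ≤ t}).toReal := fun θ t =>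
    ENNReal.toReal_nonneg
  -- Laplace transforms in ℝ≥0∞
  have hlap : ∀ (θ : Ω → ℝ), Measurable θ → (∀ ω, 0 ≤ θ ω) →
      ∫⁻ ω, ENNReal.ofReal (Real.exp (-(z * θ ω))) ∂P
        = ENNReal.ofReal z ^ n *
          ∫⁻ y in Ioi 0, ENNReal.ofReal (Real.exp (-(z * y))) *
            ENNReal.ofReal (iterCdf (fun t => (P {ω | θ ω ≤ t}).toReal) (n-1) y) := by
    intro θ hθm hθ0
    rw [laplace_eq P hz hθm hθ0]
    have h0 : ∫⁻ y in Ioi 0, ENNReal.ofReal (Real.exp (-(z * y))) * P {ω | θ ω ≤ y}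
        = ∫⁻ y in Ioi 0, ENNReal.ofReal (Real.exp (-(z * y))) *
            ENNReal.ofReal (iterCdf (fun t => (P {ω | θ ω ≤ t}).toReal) 0 y) := by
      apply lintegral_congr
      intro y
      congr 1
      exact (ENNReal.ofReal_toReal (measure_ne_top P _)).symm
    rw [h0, key_chain hz (hFmono θ) (hF0 θ) (n-1), ← mul_assoc, ← pow_succ',
      (by omega : n - 1 + 1 = n)]
  have hK : (∫⁻ y in Ioi 0, ENNReal.ofReal (Real.exp (-(z * y))) *
        ENNReal.ofReal (iterCdf Fξ (n-1) y))
      ≤ ∫⁻ y in Ioi 0, ENNReal.ofReal (Real.exp (-(z * y))) *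
        ENNReal.ofReal (iterCdf Fη (n-1) y) := by
    apply lintegral_mono_ae
    refine (ae_restrict_iff' measurableSet_Ioi).2 (ae_of_all _ fun y hy => ?_)
    exact mul_le_mul_right (ENNReal.ofReal_le_ofReal (hdom y hy.out.le)) _
  have hle : ∫⁻ ω, ENNReal.ofReal (Real.exp (-(z * ξ ω))) ∂P
      ≤ ∫⁻ ω, ENNReal.ofReal (Real.exp (-(z * η ω))) ∂P := by
    rw [hlap ξ hξm hξ0, hlap η hηm hη0]
    exact mul_le_mul_right hK _
  have hηtop : ∫⁻ ω, ENNReal.ofReal (Real.exp (-(z * η ω))) ∂P ≠ ⊤ := by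
    have h1 : ∫⁻ ω, ENNReal.ofReal (Real.exp (-(z * η ω))) ∂P ≤ ∫⁻ _, 1 ∂P := by
      apply lintegral_mono
      intro ω
      exact ENNReal.ofReal_le_one.2
        (Real.exp_le_one_iff.2 (neg_nonpos.2 (mul_nonneg hz.le (hη0 ω))))
    refine ne_top_of_le_ne_top ?_ h1
    simp
  rw [integral_eq_lintegral_of_nonneg_ae (f := fun ω => Real.exp (-(z * ξ ω))) (ae_of_all _ fun ω => (Real.exp_pos _).le)
      (Real.measurable_exp.comp ((measurable_const.mul hξm).neg)).aestronglyMeasurable,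
    integral_eq_lintegral_of_nonneg_ae (f := fun ω => Real.exp (-(z * η ω))) (ae_of_all _ fun ω => (Real.exp_pos _).le)
      (Real.measurable_exp.comp ((measurable_const.mul hηm).neg)).aestronglyMeasurable]
  exact ENNReal.toReal_mono hηtop hle
end

section
/- Let (Ω, F, P) be a probability space, Ŷ : Ω → (0,∞) a random variable, and μ a nonnegative sigma-finite Borel measure on (0,∞) with μ((0,∞)) > 0. Let V : (0,∞) → ℝ be differentiable with V′(y) = −∫_{(0,∞)} e^{−yz} dμ(z) ∈ (−∞, 0) for every y > 0. Define v(y) := E[V(yŶ)] and assume that E[|V(yŶ)|] < ∞ and E[Ŷ ∫_{(0,∞)} e^{−yŶz} dμ(dz)] < ∞ for every y > 0. Then v is infinitely differentiable on (0,∞) and, for every integer n ≥ 1 and every y > 0, (−1)^n v^(n)(y) = (−1)^n E[V^(n)(yŶ) Ŷ^n] = E[∫_{(0,∞)} e^{−zyŶ} z^{n−1} Ŷ^n dμ(z)] ∈ (0, ∞). In particular, −v′ is completely monotonic on (0,∞). -/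
open MeasureTheory Filter Set Topology ENNReal

noncomputable def Lf (μ : Measure ℝ) (n : ℕ) (t : ℝ) : ℝ≥0∞ :=
  ∫⁻ z in Set.Ioi (0:ℝ), ENNReal.ofReal (Real.exp (-(t*z)) * z^n) ∂μ

noncomputable def Gf (μ : Measure ℝ) (n : ℕ) (t : ℝ) : ℝ := (Lf μ n t).toReal

lemma Gf_cont (n : ℕ) (t : ℝ) : Continuous (fun z : ℝ => Real.exp (-(t*z)) * z^n) := by
  fun_prop

lemma Gf_eq_integral (μ : Measure ℝ) (n : ℕ) (t : ℝ) :
    Gf μ n t = ∫ z in Set.Ioi (0:ℝ), Real.exp (-(t*z)) * z^n ∂μ := by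
  refine (integral_eq_lintegral_of_nonneg_ae ?_ ?_).symm
  · exact (ae_restrict_mem measurableSet_Ioi).mono fun z hz =>
      mul_nonneg (Real.exp_nonneg _) (pow_nonneg (le_of_lt hz) n)
  · exact (Gf_cont n t).aestronglyMeasurable

lemma Lf_anti (μ : Measure ℝ) (n : ℕ) {s t : ℝ} (h : s ≤ t) : Lf μ n t ≤ Lf μ n s := by
  refine lintegral_mono_ae ((ae_restrict_mem measurableSet_Ioi).mono fun z hz => ?_)
  have hz0 : (0:ℝ) ≤ z := le_of_lt hz
  refine ENNReal.ofReal_le_ofReal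
    (mul_le_mul_of_nonneg_right (Real.exp_le_exp.2 (by nlinarith)) (pow_nonneg hz0 n))

lemma key_bound (n : ℕ) {t : ℝ} (ht : 0 < t) {z : ℝ} (hz : 0 ≤ z) :
    Real.exp (-(t*z)) * z^n ≤ ((n.factorial : ℝ) * (2/t)^n) * Real.exp (-(t/2*z)) := by
  have hfac : (0:ℝ) < n.factorial := by positivity
  have h1 : (t/2*z)^n / (n.factorial : ℝ) ≤ Real.exp (t/2*z) :=
    Real.pow_div_factorial_le_exp _ (by positivity) n
  rw [div_le_iff₀ hfac] at h1
  have h2 : z ^ n ≤ ((n.factorial : ℝ) * (2/t)^n) * Real.exp (t/2*z) := by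
    have e : z ^ n = (2/t)^n * (t/2*z)^n := by
      rw [← mul_pow]; congr 1; field_simp
    rw [e]
    calc (2/t)^n * (t/2*z)^n ≤ (2/t)^n * (Real.exp (t/2*z) * n.factorial) :=
          mul_le_mul_of_nonneg_left h1 (by positivity)
      _ = ((n.factorial : ℝ) * (2/t)^n) * Real.exp (t/2*z) := by ring
  calc Real.exp (-(t*z)) * z^n
      ≤ Real.exp (-(t*z)) * (((n.factorial : ℝ) * (2/t)^n) * Real.exp (t/2*z)) :=
        mul_le_mul_of_nonneg_left h2 (Real.exp_nonneg _)
    _ = ((n.factorial : ℝ) * (2/t)^n) * (Real.exp (-(t*z)) * Real.exp (t/2*z)) := by ring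
    _ = ((n.factorial : ℝ) * (2/t)^n) * Real.exp (-(t/2*z)) := by
        rw [← Real.exp_add]; congr 2; ring

lemma Lf_le (μ : Measure ℝ) (n : ℕ) {t : ℝ} (ht : 0 < t) :
    Lf μ n t ≤ ENNReal.ofReal ((n.factorial : ℝ) * (2/t)^n) * Lf μ 0 (t/2) := by
  rw [Lf, Lf, ← lintegral_const_mul' _ _ ofReal_ne_top]
  refine lintegral_mono_ae ((ae_restrict_mem measurableSet_Ioi).mono fun z hz => ?_)
  rw [← ENNReal.ofReal_mul (by positivity)]
  exact ENNReal.ofReal_le_ofReal (by simpa using key_bound n ht hz.le)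

lemma Lf_zero_lt_top (μ : Measure ℝ)
    (hint : ∀ y > (0:ℝ),
      MeasureTheory.IntegrableOn (fun z => Real.exp (-(y * z))) (Set.Ioi 0) μ)
    {t : ℝ} (ht : 0 < t) : Lf μ 0 t < ⊤ := by
  have h := (hint t ht).hasFiniteIntegral
  rw [hasFiniteIntegral_iff_ofReal (Eventually.of_forall fun z => Real.exp_nonneg _)] at h
  refine lt_of_le_of_lt (le_of_eq (lintegral_congr fun z => ?_)) h
  simp

lemma Lf_lt_top (μ : Measure ℝ)
    (hint : ∀ y > (0:ℝ),
      MeasureTheory.IntegrableOn (fun z => Real.exp (-(y * z))) (Set.Ioi 0) μ)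
    (n : ℕ) {t : ℝ} (ht : 0 < t) : Lf μ n t < ⊤ :=
  lt_of_le_of_lt (Lf_le μ n ht)
    (ENNReal.mul_lt_top ofReal_lt_top (Lf_zero_lt_top μ hint (by positivity)))

lemma Lf_pos (μ : Measure ℝ) (hμne : μ (Set.Ioi 0) ≠ 0) (n : ℕ) (t : ℝ) :
    0 < Lf μ n t := by
  have hm : Measurable (fun z : ℝ => ENNReal.ofReal (Real.exp (-(t*z)) * z^n)) :=
    ENNReal.measurable_ofReal.comp (by fun_prop)
  rw [Lf, lintegral_pos_iff_support hm]
  have h1 : (0:ℝ≥0∞) < (μ.restrict (Set.Ioi 0)) (Set.Ioi 0) := by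
    rw [Measure.restrict_apply_self]; exact pos_iff_ne_zero.mpr hμne
  refine h1.trans_le (measure_mono fun z hz => ?_)
  simp only [Function.mem_support, ne_eq, ENNReal.ofReal_eq_zero, not_le]
  have : (0:ℝ) < z := hz
  positivity

lemma Gf_nonneg (μ : Measure ℝ) (n : ℕ) (t : ℝ) : 0 ≤ Gf μ n t := ENNReal.toReal_nonneg

lemma Gf_pos (μ : Measure ℝ) (hμne : μ (Set.Ioi 0) ≠ 0)
    (hint : ∀ y > (0:ℝ),
      MeasureTheory.IntegrableOn (fun z => Real.exp (-(y * z))) (Set.Ioi 0) μ)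
    (n : ℕ) {t : ℝ} (ht : 0 < t) : 0 < Gf μ n t :=
  ENNReal.toReal_pos (Lf_pos μ hμne n t).ne' (Lf_lt_top μ hint n ht).ne

lemma Gf_anti (μ : Measure ℝ)
    (hint : ∀ y > (0:ℝ),
      MeasureTheory.IntegrableOn (fun z => Real.exp (-(y * z))) (Set.Ioi 0) μ)
    (n : ℕ) {s t : ℝ} (hs : 0 < s) (h : s ≤ t) : Gf μ n t ≤ Gf μ n s :=
  ENNReal.toReal_mono (Lf_lt_top μ hint n hs).ne (Lf_anti μ n h)

lemma Gf_measurable (μ : Measure ℝ) [SigmaFinite μ] (n : ℕ) : Measurable (Gf μ n) := by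
  apply ENNReal.measurable_toReal.comp
  exact Measurable.lintegral_prod_right'
    (f := fun p : ℝ × ℝ => ENNReal.ofReal (Real.exp (-(p.1*p.2)) * p.2^n))
    (ENNReal.measurable_ofReal.comp (by fun_prop))

lemma integrableOn_Gf (μ : Measure ℝ)
    (hint : ∀ y > (0:ℝ),
      MeasureTheory.IntegrableOn (fun z => Real.exp (-(y * z))) (Set.Ioi 0) μ)
    (n : ℕ) {t : ℝ} (ht : 0 < t) :
    MeasureTheory.IntegrableOn (fun z => Real.exp (-(t*z)) * z^n) (Set.Ioi 0) μ := by
  constructor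
  · exact (Gf_cont n t).aestronglyMeasurable
  · rw [hasFiniteIntegral_iff_ofReal ((ae_restrict_mem measurableSet_Ioi).mono
      fun z hz => mul_nonneg (Real.exp_nonneg _) (pow_nonneg (le_of_lt hz) n))]
    exact Lf_lt_top μ hint n ht

lemma Gf_hasDerivAt (μ : Measure ℝ)
    (hint : ∀ y > (0:ℝ),
      MeasureTheory.IntegrableOn (fun z => Real.exp (-(y * z))) (Set.Ioi 0) μ)
    (n : ℕ) {y : ℝ} (hy : 0 < y) :
    HasDerivAt (Gf μ n) (-(Gf μ (n+1) y)) y := by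
  have main := hasDerivAt_integral_of_dominated_loc_of_deriv_le (μ := μ.restrict (Set.Ioi 0))
      (F := fun t z => Real.exp (-(t*z)) * z^n)
      (F' := fun t z => -(Real.exp (-(t*z)) * z^(n+1)))
      (x₀ := y) (bound := fun z => Real.exp (-(y/2*z)) * z^(n+1))
      (Metric.ball_mem_nhds y (half_pos hy))
      (Eventually.of_forall fun x => (Gf_cont n x).aestronglyMeasurable)
      (integrableOn_Gf μ hint n hy)
      (((Gf_cont (n+1) y).neg).aestronglyMeasurable)
      ?_ (integrableOn_Gf μ hint (n+1) (half_pos hy)) ?_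
  · have hfun : Gf μ n = fun t => ∫ z in Set.Ioi (0:ℝ), Real.exp (-(t*z)) * z^n ∂μ :=
      funext (Gf_eq_integral μ n)
    rw [hfun, Gf_eq_integral, ← integral_neg]
    exact main.2
  · refine (ae_restrict_mem measurableSet_Ioi).mono fun z hz x hx => ?_
    have hz0 : (0:ℝ) < z := hz
    have hx2 : y/2 ≤ x := by
      rw [Metric.mem_ball, Real.dist_eq, abs_lt] at hx; linarith
    rw [norm_neg, Real.norm_eq_abs, abs_of_nonneg (by positivity)]
    exact mul_le_mul_of_nonneg_right (Real.exp_le_exp.2 (by nlinarith))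
      (pow_nonneg hz0.le _)
  · refine Eventually.of_forall fun z x _ => ?_
    have h := ((((hasDerivAt_mul_const z).neg).exp).mul_const (z^n) : HasDerivAt
      (fun t => Real.exp (-(t*z)) * z^n) (Real.exp (-(x*z)) * -z * z^n) x)
    refine h.congr_deriv ?_
    show Real.exp (-(x*z)) * -z * z^n = _
    ring

lemma bound_integrable {Ω : Type*} [MeasurableSpace Ω] (P : Measure Ω)
    (Y : Ω → ℝ) (hYm : Measurable Y) (hYpos : ∀ ω, 0 < Y ω)
    (μ : Measure ℝ) [SigmaFinite μ]
    (hint : ∀ y > (0:ℝ),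
      MeasureTheory.IntegrableOn (fun z => Real.exp (-(y * z))) (Set.Ioi 0) μ)
    {c : ℝ} (hc : 0 < c)
    (hdomc : (∫⁻ ω, ENNReal.ofReal (Y ω)
        * (∫⁻ z in Set.Ioi (0:ℝ), ENNReal.ofReal (Real.exp (-(c * Y ω * z))) ∂μ) ∂P) < ⊤) :
    Integrable (fun ω => Y ω * Gf μ 0 (c * Y ω)) P := by
  constructor
  · exact (hYm.mul ((Gf_measurable μ 0).comp (measurable_const.mul hYm))).aestronglyMeasurable
  · rw [hasFiniteIntegral_iff_ofReal (Eventually.of_forall fun ω =>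
      mul_nonneg (hYpos ω).le (Gf_nonneg μ 0 _))]
    calc ∫⁻ ω, ENNReal.ofReal (Y ω * Gf μ 0 (c * Y ω)) ∂P
        = ∫⁻ ω, ENNReal.ofReal (Y ω) * Lf μ 0 (c * Y ω) ∂P := by
          refine lintegral_congr fun ω => ?_
          rw [ENNReal.ofReal_mul (hYpos ω).le, Gf,
            ENNReal.ofReal_toReal (Lf_lt_top μ hint 0 (mul_pos hc (hYpos ω))).ne]
      _ < ⊤ := by
          refine lt_of_le_of_lt (le_of_eq (lintegral_congr fun ω => ?_)) hdomc
          congr 1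
          exact lintegral_congr fun z => by simp

lemma Gf_mul_le (μ : Measure ℝ)
    (hint : ∀ y > (0:ℝ),
      MeasureTheory.IntegrableOn (fun z => Real.exp (-(y * z))) (Set.Ioi 0) μ)
    (m : ℕ) {c w : ℝ} (hc : 0 < c) (hw : 0 < w) :
    Gf μ m (c*w) * w^(m+1) ≤ ((m.factorial : ℝ) * (2/c)^m) * (w * Gf μ 0 (c/2*w)) := by
  have hcw : 0 < c * w := mul_pos hc hw
  have h1 : Gf μ m (c*w) ≤ ((m.factorial : ℝ) * (2/(c*w))^m) * Gf μ 0 ((c*w)/2) := by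
    rw [Gf, Gf]
    calc (Lf μ m (c*w)).toReal
        ≤ (ENNReal.ofReal ((m.factorial : ℝ) * (2/(c*w))^m) * Lf μ 0 ((c*w)/2)).toReal :=
          ENNReal.toReal_mono
            (ENNReal.mul_ne_top ofReal_ne_top (Lf_lt_top μ hint 0 (by positivity)).ne)
            (Lf_le μ m hcw)
      _ = ((m.factorial : ℝ) * (2/(c*w))^m) * (Lf μ 0 ((c*w)/2)).toReal := by
          rw [ENNReal.toReal_mul, ENNReal.toReal_ofReal (by positivity)]
  calc Gf μ m (c*w) * w^(m+1)
      ≤ (((m.factorial : ℝ) * (2/(c*w))^m) * Gf μ 0 ((c*w)/2)) * w^(m+1) :=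
        mul_le_mul_of_nonneg_right h1 (by positivity)
    _ = ((m.factorial : ℝ) * (2/c)^m) * (w * Gf μ 0 (c/2*w)) := by
        rw [show (c*w)/2 = c/2*w by ring]
        have : (2/(c*w))^m * w^(m+1) = (2/c)^m * w := by
          rw [pow_succ, ← mul_assoc, ← mul_pow, show 2/(c*w)*w = 2/c by field_simp]
        calc ((m.factorial : ℝ) * (2/(c*w))^m) * Gf μ 0 (c/2*w) * w^(m+1)
            = (m.factorial : ℝ) * ((2/(c*w))^m * w^(m+1)) * Gf μ 0 (c/2*w) := by ring
          _ = _ := by rw [this]; ring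

lemma main_step {Ω : Type*} [MeasurableSpace Ω] (P : Measure Ω)
    (Y : Ω → ℝ) (hYm : Measurable Y) (hYpos : ∀ ω, 0 < Y ω)
    (μ : Measure ℝ) [SigmaFinite μ]
    (hint : ∀ y > (0:ℝ),
      MeasureTheory.IntegrableOn (fun z => Real.exp (-(y * z))) (Set.Ioi 0) μ)
    (hdom : ∀ y > (0:ℝ),
      (∫⁻ ω, ENNReal.ofReal (Y ω)
        * (∫⁻ z in Set.Ioi (0:ℝ), ENNReal.ofReal (Real.exp (-(y * Y ω * z))) ∂μ) ∂P) < ⊤)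
    (m : ℕ) {y : ℝ} (hy : 0 < y) :
    Integrable (fun ω => Gf μ m (y * Y ω) * Y ω ^ (m+1)) P ∧
    HasDerivAt (fun x => ∫ ω, Gf μ m (x * Y ω) * Y ω ^ (m+1) ∂P)
      (∫ ω, -(Gf μ (m+1) (y * Y ω) * Y ω ^ (m+2)) ∂P) y := by
  have hmeas : ∀ (k : ℕ) (x : ℝ), AEStronglyMeasurable (fun ω => Gf μ k (x * Y ω) * Y ω ^ (k+1)) P :=
    fun k x => (((Gf_measurable μ k).comp (measurable_const.mul hYm)).mul
      (hYm.pow_const _)).aestronglyMeasurable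
  have hFnonneg : ∀ (k : ℕ) (x : ℝ) (ω : Ω), 0 ≤ Gf μ k (x * Y ω) * Y ω ^ (k+1) :=
    fun k x ω => mul_nonneg (Gf_nonneg μ k _) (pow_nonneg (hYpos ω).le _)
  -- integrability of F at level k for any x > 0 with bound at x/2
  have hFint : ∀ (k : ℕ) {x : ℝ}, 0 < x →
      Integrable (fun ω => Gf μ k (x * Y ω) * Y ω ^ (k+1)) P := by
    intro k x hx
    have hb := (bound_integrable P Y hYm hYpos μ hint (half_pos hx)
      (hdom (x/2) (half_pos hx))).const_mul ((k.factorial : ℝ) * (2/x)^k)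
    refine hb.mono (hmeas k x) (Eventually.of_forall fun ω => ?_)
    rw [Real.norm_eq_abs, Real.norm_eq_abs, abs_of_nonneg (hFnonneg k x ω),
      abs_of_nonneg (mul_nonneg (by positivity)
        (mul_nonneg (hYpos ω).le (Gf_nonneg μ 0 _)))]
    exact Gf_mul_le μ hint k hx (hYpos ω)
  refine ⟨hFint m hy, ?_⟩
  have main := hasDerivAt_integral_of_dominated_loc_of_deriv_le (μ := P)
      (F := fun x ω => Gf μ m (x * Y ω) * Y ω ^ (m+1))
      (F' := fun x ω => -(Gf μ (m+1) (x * Y ω) * Y ω ^ (m+2)))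
      (x₀ := y)
      (bound := fun ω => (((m+1).factorial : ℝ) * (2/(y/2))^(m+1))
        * (Y ω * Gf μ 0 (y/4 * Y ω)))
      (Metric.ball_mem_nhds y (half_pos hy))
      (Eventually.of_forall fun x => hmeas m x)
      (hFint m hy)
      ((hmeas (m+1) y).neg)
      ?_
      ((bound_integrable P Y hYm hYpos μ hint (by positivity)
        (hdom (y/4) (by positivity))).const_mul _)
      ?_
  · exact main.2
  · refine Eventually.of_forall fun ω x hx => ?_
    have hx2 : y/2 ≤ x := by
      rw [Metric.mem_ball, Real.dist_eq, abs_lt] at hx; linarith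
    rw [norm_neg, Real.norm_eq_abs, abs_of_nonneg (hFnonneg (m+1) x ω)]
    calc Gf μ (m+1) (x * Y ω) * Y ω ^ (m+2)
        ≤ Gf μ (m+1) (y/2 * Y ω) * Y ω ^ (m+2) := by
          refine mul_le_mul_of_nonneg_right
            (Gf_anti μ hint (m+1) (mul_pos (half_pos hy) (hYpos ω))
              (mul_le_mul_of_nonneg_right hx2 (hYpos ω).le))
            (pow_nonneg (hYpos ω).le _)
      _ ≤ (((m+1).factorial : ℝ) * (2/(y/2))^(m+1)) * (Y ω * Gf μ 0 ((y/2)/2 * Y ω)) :=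
          Gf_mul_le μ hint (m+1) (half_pos hy) (hYpos ω)
      _ = (((m+1).factorial : ℝ) * (2/(y/2))^(m+1)) * (Y ω * Gf μ 0 (y/4 * Y ω)) := by
          rw [show (y:ℝ)/2/2 = y/4 by ring]
  · refine Eventually.of_forall fun ω x hx => ?_
    have hx0 : 0 < x := by
      rw [Metric.mem_ball, Real.dist_eq, abs_lt] at hx; linarith
    have h1 := Gf_hasDerivAt μ hint m (mul_pos hx0 (hYpos ω))
    have h2 := (h1.comp x (hasDerivAt_mul_const (Y ω))).mul_const ((Y ω)^(m+1))
    refine h2.congr_deriv ?_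
    ring

lemma v_step {Ω : Type*} [MeasurableSpace Ω] (P : Measure Ω)
    (Y : Ω → ℝ) (hYm : Measurable Y) (hYpos : ∀ ω, 0 < Y ω)
    (μ : Measure ℝ) [SigmaFinite μ]
    (hint : ∀ y > (0:ℝ),
      MeasureTheory.IntegrableOn (fun z => Real.exp (-(y * z))) (Set.Ioi 0) μ)
    (hdom : ∀ y > (0:ℝ),
      (∫⁻ ω, ENNReal.ofReal (Y ω)
        * (∫⁻ z in Set.Ioi (0:ℝ), ENNReal.ofReal (Real.exp (-(y * Y ω * z))) ∂μ) ∂P) < ⊤)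
    (V : ℝ → ℝ)
    (hV' : ∀ y > (0:ℝ),
      HasDerivAt V (-(∫ z in Set.Ioi (0:ℝ), Real.exp (-(y * z)) ∂μ)) y)
    (hVint : ∀ y > (0:ℝ), MeasureTheory.Integrable (fun ω => V (y * Y ω)) P)
    {y : ℝ} (hy : 0 < y) :
    HasDerivAt (fun x => ∫ ω, V (x * Y ω) ∂P)
      (∫ ω, -(Gf μ 0 (y * Y ω) * Y ω) ∂P) y := by
  have hVc : ContinuousOn V (Set.Ioi 0) := fun t ht => ((hV' t ht).continuousAt).continuousWithinAt
  have hVmeas : ∀ {x : ℝ}, 0 < x → AEStronglyMeasurable (fun ω => V (x * Y ω)) P := by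
    intro x hx
    have hsub : Measurable (fun ω => (⟨x * Y ω, mul_pos hx (hYpos ω)⟩ : Set.Ioi (0:ℝ))) :=
      (measurable_const.mul hYm).subtype_mk
    exact (((continuousOn_iff_continuous_restrict.mp hVc).measurable).comp hsub).aestronglyMeasurable
  have hGf0 : ∀ t > (0:ℝ), (∫ z in Set.Ioi (0:ℝ), Real.exp (-(t * z)) ∂μ) = Gf μ 0 t := by
    intro t ht
    rw [Gf_eq_integral]
    simp
  have main := hasDerivAt_integral_of_dominated_loc_of_deriv_le (μ := P)
      (F := fun x ω => V (x * Y ω))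
      (F' := fun x ω => -(Gf μ 0 (x * Y ω) * Y ω))
      (x₀ := y)
      (bound := fun ω => Y ω * Gf μ 0 (y/2 * Y ω))
      (Metric.ball_mem_nhds y (half_pos hy))
      ((eventually_gt_nhds hy).mono fun x hx => hVmeas hx)
      (hVint y hy)
      ((((Gf_measurable μ 0).comp (measurable_const.mul hYm)).mul hYm).aestronglyMeasurable.neg)
      ?_
      (bound_integrable P Y hYm hYpos μ hint (half_pos hy) (hdom (y/2) (half_pos hy)))
      ?_
  · exact main.2
  · refine Eventually.of_forall fun ω x hx => ?_
    have hx2 : y/2 ≤ x := by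
      rw [Metric.mem_ball, Real.dist_eq, abs_lt] at hx; linarith
    rw [norm_neg, Real.norm_eq_abs,
      abs_of_nonneg (mul_nonneg (Gf_nonneg μ 0 _) (hYpos ω).le)]
    show Gf μ 0 (x * Y ω) * Y ω ≤ Y ω * Gf μ 0 (y/2 * Y ω)
    rw [mul_comm (Y ω)]
    exact mul_le_mul_of_nonneg_right
      (Gf_anti μ hint 0 (mul_pos (half_pos hy) (hYpos ω))
        (mul_le_mul_of_nonneg_right hx2 (hYpos ω).le))
      (hYpos ω).le
  · refine Eventually.of_forall fun ω x hx => ?_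
    have hx0 : 0 < x := by
      rw [Metric.mem_ball, Real.dist_eq, abs_lt] at hx; linarith
    have hxY : 0 < x * Y ω := mul_pos hx0 (hYpos ω)
    have h1 := hV' (x * Y ω) hxY
    rw [hGf0 _ hxY] at h1
    have h2 := h1.comp x (hasDerivAt_mul_const (Y ω))
    refine h2.congr_deriv ?_
    ring

/-- Let `Ŷ > 0` be a random variable and `μ` a nonzero nonnegative
sigma-finite Borel measure on `(0,∞)`.  Let `V` be differentiable on `(0,∞)` with
`V'(y) = −∫_{(0,∞)} e^{−yz} dμ(z) ∈ (−∞,0)`.  Set `v(y) = E[V(yŶ)]` and assume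
`E[|V(yŶ)|] < ∞` and `E[Ŷ ∫ e^{−yŶz} dμ(z)] < ∞` for every `y > 0`.  Then `v` and `V`
have derivatives of all orders on `(0,∞)` and for every `n ≥ 1`, `y > 0`:
`(−1)ⁿ v⁽ⁿ⁾(y) = (−1)ⁿ E[V⁽ⁿ⁾(yŶ) Ŷⁿ] = E[∫ e^{−zyŶ} z^{n−1} Ŷⁿ dμ(z)] ∈ (0,∞)`;
in particular `−v'` is completely monotonic on `(0,∞)`. -/
theorem stmt9 {Ω : Type*} [MeasurableSpace Ω] (P : Measure Ω) [IsProbabilityMeasure P]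
    (Y : Ω → ℝ) (hYm : Measurable Y) (hYpos : ∀ ω, 0 < Y ω)
    (μ : Measure ℝ) [SigmaFinite μ] (hsupp : μ (Set.Iic 0) = 0)
    (hμne : μ (Set.Ioi 0) ≠ 0)
    (V : ℝ → ℝ)
    (hint : ∀ y > (0:ℝ),
      MeasureTheory.IntegrableOn (fun z => Real.exp (-(y * z))) (Set.Ioi 0) μ)
    (hV' : ∀ y > (0:ℝ),
      HasDerivAt V (-(∫ z in Set.Ioi (0:ℝ), Real.exp (-(y * z)) ∂μ)) y)
    (v : ℝ → ℝ) (hv : ∀ y : ℝ, v y = ∫ ω, V (y * Y ω) ∂P)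
    (hVint : ∀ y > (0:ℝ), MeasureTheory.Integrable (fun ω => V (y * Y ω)) P)
    (hdom : ∀ y > (0:ℝ),
      (∫⁻ ω, ENNReal.ofReal (Y ω)
        * (∫⁻ z in Set.Ioi (0:ℝ), ENNReal.ofReal (Real.exp (-(y * Y ω * z))) ∂μ) ∂P) < ⊤) :
    ∃ dv dV : ℕ → ℝ → ℝ, dv 0 = v ∧ dV 0 = V ∧
      (∀ k : ℕ, ∀ y > (0:ℝ), HasDerivAt (dv k) (dv (k + 1) y) y) ∧
      (∀ k : ℕ, ∀ y > (0:ℝ), HasDerivAt (dV k) (dV (k + 1) y) y) ∧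
      (∀ n : ℕ, 1 ≤ n → ∀ y > (0:ℝ),
        MeasureTheory.Integrable (fun ω => dV n (y * Y ω) * Y ω ^ n) P ∧
        (-1 : ℝ) ^ n * dv n y = (-1 : ℝ) ^ n * ∫ ω, dV n (y * Y ω) * Y ω ^ n ∂P ∧
        (-1 : ℝ) ^ n * dv n y
          = ∫ ω, (∫ z in Set.Ioi (0:ℝ),
              Real.exp (-(z * (y * Y ω))) * z ^ (n - 1) * Y ω ^ n ∂μ) ∂P ∧
        0 < (-1 : ℝ) ^ n * dv n y) := by
  have hGf0 : ∀ t > (0:ℝ), (∫ z in Set.Ioi (0:ℝ), Real.exp (-(t * z)) ∂μ) = Gf μ 0 t := by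
    intro t ht
    rw [Gf_eq_integral]
    simp
  refine ⟨fun k => Nat.casesOn k v
      (fun m => fun y => (-1:ℝ)^(m+1) * ∫ ω, Gf μ m (y * Y ω) * Y ω ^ (m+1) ∂P),
    fun k => Nat.casesOn k V (fun m => fun t => (-1:ℝ)^(m+1) * Gf μ m t),
    rfl, rfl, ?_, ?_, ?_⟩
  · -- derivatives of dv
    intro k y hy
    cases k with
    | zero =>
      have h := v_step P Y hYm hYpos μ hint hdom V hV' hVint hy
      rw [show (fun x => ∫ ω, V (x * Y ω) ∂P) = v from (funext hv).symm] at h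
      show HasDerivAt v ((-1:ℝ)^(0+1) * ∫ ω, Gf μ 0 (y * Y ω) * Y ω ^ (0+1) ∂P) y
      convert h using 1
      rw [integral_neg]
      simp only [pow_one, zero_add, pow_one]
      ring
    | succ m =>
      have h := ((main_step P Y hYm hYpos μ hint hdom m hy).2).const_mul ((-1:ℝ)^(m+1))
      show HasDerivAt (fun y => (-1:ℝ)^(m+1) * ∫ ω, Gf μ m (y * Y ω) * Y ω ^ (m+1) ∂P)
        ((-1:ℝ)^(m+1+1) * ∫ ω, Gf μ (m+1) (y * Y ω) * Y ω ^ (m+1+1) ∂P) y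
      refine h.congr_deriv ?_
      rw [integral_neg]
      ring
  · -- derivatives of dV
    intro k y hy
    cases k with
    | zero =>
      have h := hV' y hy
      rw [hGf0 y hy] at h
      show HasDerivAt V ((-1:ℝ)^(0+1) * Gf μ 0 y) y
      convert h using 1
      ring
    | succ m =>
      have h := (Gf_hasDerivAt μ hint m hy).const_mul ((-1:ℝ)^(m+1))
      show HasDerivAt (fun t => (-1:ℝ)^(m+1) * Gf μ m t) ((-1:ℝ)^(m+1+1) * Gf μ (m+1) y) y
      refine h.congr_deriv ?_
      ring
  · -- the quantitative statements
    intro n hn y hy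
    obtain ⟨m, rfl⟩ : ∃ m, n = m + 1 := ⟨n - 1, (Nat.succ_pred_eq_of_pos hn).symm⟩
    have hms := main_step P Y hYm hYpos μ hint hdom m hy
    have hsq : ((-1:ℝ)^(m+1)) * ((-1:ℝ)^(m+1)) = 1 := by
      rw [← pow_add]
      exact Even.neg_one_pow ⟨m+1, by ring⟩
    have hintg : ∀ x : ℝ, (∫ ω, ((-1:ℝ)^(m+1) * Gf μ m (x * Y ω)) * Y ω ^ (m+1) ∂P)
        = (-1:ℝ)^(m+1) * ∫ ω, Gf μ m (x * Y ω) * Y ω ^ (m+1) ∂P := by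
      intro x
      simp only [mul_assoc]
      exact integral_const_mul _ _
    have hI : (-1:ℝ)^(m+1) * ((-1:ℝ)^(m+1) * ∫ ω, Gf μ m (y * Y ω) * Y ω ^ (m+1) ∂P)
        = ∫ ω, Gf μ m (y * Y ω) * Y ω ^ (m+1) ∂P := by
      rw [← mul_assoc, hsq, one_mul]
    refine ⟨?_, ?_, ?_, ?_⟩
    · show Integrable (fun ω => ((-1:ℝ)^(m+1) * Gf μ m (y * Y ω)) * Y ω ^ (m+1)) P
      have := hms.1.const_mul ((-1:ℝ)^(m+1))
      refine this.congr (Eventually.of_forall fun ω => by ring)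
    · show (-1:ℝ)^(m+1) * ((-1:ℝ)^(m+1) * ∫ ω, Gf μ m (y * Y ω) * Y ω ^ (m+1) ∂P)
        = (-1:ℝ)^(m+1) * ∫ ω, ((-1:ℝ)^(m+1) * Gf μ m (y * Y ω)) * Y ω ^ (m+1) ∂P
      rw [hI, hintg, ← mul_assoc, hsq, one_mul]
    · show (-1:ℝ)^(m+1) * ((-1:ℝ)^(m+1) * ∫ ω, Gf μ m (y * Y ω) * Y ω ^ (m+1) ∂P)
        = ∫ ω, (∫ z in Set.Ioi (0:ℝ),
            Real.exp (-(z * (y * Y ω))) * z ^ (m+1-1) * Y ω ^ (m+1) ∂μ) ∂P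
      rw [hI]
      refine integral_congr_ae (Eventually.of_forall fun ω => ?_)
      have e1 : ∀ z : ℝ, Real.exp (-(z * (y * Y ω))) * z ^ (m+1-1) * Y ω ^ (m+1)
          = (Real.exp (-((y * Y ω) * z)) * z ^ m) * Y ω ^ (m+1) := by
        intro z
        rw [mul_comm z]
        rfl
      simp only [e1]
      rw [integral_mul_const, ← Gf_eq_integral]
    · show 0 < (-1:ℝ)^(m+1) * ((-1:ℝ)^(m+1) * ∫ ω, Gf μ m (y * Y ω) * Y ω ^ (m+1) ∂P)
      rw [hI]
      have hnn : 0 ≤ fun ω => Gf μ m (y * Y ω) * Y ω ^ (m+1) :=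
        fun ω => mul_nonneg (Gf_nonneg μ m _) (pow_nonneg (hYpos ω).le _)
      rw [integral_pos_iff_support_of_nonneg hnn hms.1]
      have : Function.support (fun ω => Gf μ m (y * Y ω) * Y ω ^ (m+1)) = Set.univ := by
        ext ω
        simp only [Function.mem_support, Set.mem_univ, iff_true]
        exact ne_of_gt (mul_pos (Gf_pos μ hμne hint m (mul_pos hy (hYpos ω)))
          (pow_pos (hYpos ω) _))
      rw [this]
      simp
end

section
/- Let v : (0,∞) → ℝ be real-analytic with −v′ completely monotonic, (−1)^n v^(n)(y) > 0 for every integer n ≥ 1 and every y > 0, lim_{y↓0} v′(y) = −∞, and lim_{y→∞} v′(y) = 0. Define u(x) := inf_{y>0} (v(y) + x·y) for x > 0. Then u is real-analytic on (0,∞), strictly increasing, strictly concave, satisfies the Inada conditions lim_{x↓0} u′(x) = ∞ and lim_{x→∞} u′(x) = 0, and the inverse of its marginal is (u′)^{−1} = −v′, which is completely monotonic; i.e., u belongs to the class CMIM. -/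
open MeasureTheory Filter Set Topology ENNReal

/-- Let `v` be real-analytic on `(0,∞)` with `−v'` completely monotonic,
`(−1)ⁿ v⁽ⁿ⁾ > 0` on `(0,∞)` for every `n ≥ 1`, `v'(0+) = −∞` and `v'(∞) = 0`.  Define
`u(x) = inf_{y>0} (v(y) + x y)`.  Then `u` is real-analytic on `(0,∞)`, strictly
increasing, strictly concave, differentiable with marginal `u'` satisfying the Inada
conditions `u'(0+) = ∞`, `u'(∞) = 0`, and the inverse of `u'` is `−v'` (which is
completely monotonic); i.e. `u ∈ 𝒞ℳℐℳ`. -/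
theorem stmt10 (v : ℝ → ℝ) (dv : ℕ → ℝ → ℝ) (hdv0 : dv 0 = v)
    (hderiv : ∀ k : ℕ, ∀ y > (0:ℝ), HasDerivAt (dv k) (dv (k + 1) y) y)
    (hanal : AnalyticOnNhd ℝ v (Set.Ioi 0))
    (hsign : ∀ n : ℕ, 1 ≤ n → ∀ y > (0:ℝ), 0 < (-1 : ℝ) ^ n * dv n y)
    (hv'0 : Filter.Tendsto (dv 1) (nhdsWithin 0 (Set.Ioi 0)) Filter.atBot)
    (hv'inf : Filter.Tendsto (dv 1) Filter.atTop (nhds 0))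
    (u : ℝ → ℝ)
    (hu : ∀ x : ℝ, u x = sInf ((fun y => v y + x * y) '' Set.Ioi 0)) :
    AnalyticOnNhd ℝ u (Set.Ioi 0) ∧
    StrictMonoOn u (Set.Ioi 0) ∧
    StrictConcaveOn ℝ (Set.Ioi 0) u ∧
    ∃ du : ℝ → ℝ,
      (∀ x > (0:ℝ), HasDerivAt u (du x) x) ∧
      Filter.Tendsto du (nhdsWithin 0 (Set.Ioi 0)) Filter.atTop ∧
      Filter.Tendsto du Filter.atTop (nhds 0) ∧
      (∀ y > (0:ℝ), du (-(dv 1 y)) = y) ∧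
      (∀ x > (0:ℝ), -(dv 1 (du x)) = x) := by
  -- basic sign facts
  have hneg : ∀ y > (0:ℝ), dv 1 y < 0 := by
    intro y hy
    have := hsign 1 le_rfl y hy
    simpa using this
  have hpos2 : ∀ y > (0:ℝ), 0 < dv 2 y := by
    intro y hy
    have := hsign 2 (by norm_num) y hy
    simpa using this
  -- dv 1 is strictly monotone on Ioi 0
  have hmono : StrictMonoOn (dv 1) (Set.Ioi 0) := by
    apply strictMonoOn_of_deriv_pos (convex_Ioi 0)
    · intro y hy
      exact ((hderiv 1 y hy).continuousAt).continuousWithinAt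
    · intro y hy
      rw [interior_Ioi] at hy
      rw [(hderiv 1 y hy).deriv]
      exact hpos2 y hy
  -- surjectivity onto Iio 0 : for every x > 0 there is y > 0 with dv 1 y = -x
  have hex : ∀ x : ℝ, ∃ y : ℝ, 0 < x → (0 < y ∧ dv 1 y = -x) := by
    intro x
    by_cases hx : 0 < x
    · have h1 : ∀ᶠ y in nhdsWithin 0 (Set.Ioi 0), dv 1 y < -x :=
        hv'0.eventually (eventually_lt_atBot (-x))
      obtain ⟨y₁, hy₁lt, hy₁pos⟩ := (h1.and self_mem_nhdsWithin).exists
      have h2 : ∀ᶠ y in Filter.atTop, -x < dv 1 y :=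
        hv'inf.eventually (eventually_gt_nhds (by linarith))
      obtain ⟨y₂, hy₂ge, hy₂gt⟩ := ((eventually_ge_atTop y₁).and h2).exists
      have hcont : ContinuousOn (dv 1) (Set.Icc y₁ y₂) := by
        intro y hy
        exact ((hderiv 1 y (lt_of_lt_of_le hy₁pos hy.1)).continuousAt).continuousWithinAt
      have := intermediate_value_Icc hy₂ge hcont
      have hmem : -x ∈ Set.Icc (dv 1 y₁) (dv 1 y₂) := ⟨le_of_lt hy₁lt, le_of_lt hy₂gt⟩
      obtain ⟨y, hyI, hyeq⟩ := this hmem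
      exact ⟨y, fun _ => ⟨lt_of_lt_of_le hy₁pos hyI.1, hyeq⟩⟩
    · exact ⟨1, fun h => absurd h hx⟩
  choose w hw using hex
  have hwpos : ∀ x > (0:ℝ), 0 < w x := fun x hx => (hw x hx).1
  have hweq : ∀ x > (0:ℝ), dv 1 (w x) = -x := fun x hx => (hw x hx).2
  -- g y = -(dv 1 y)
  set g : ℝ → ℝ := fun y => -(dv 1 y) with hg
  have hgpos : ∀ y > (0:ℝ), 0 < g y := fun y hy => by
    simpa [hg] using hneg y hy
  have hgw : ∀ x > (0:ℝ), g (w x) = x := fun x hx => by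
    simp [hg, hweq x hx]
  have hwg : ∀ y > (0:ℝ), w (g y) = y := by
    intro y hy
    have hgy : 0 < g y := hgpos y hy
    have h1 : dv 1 (w (g y)) = dv 1 y := by
      rw [hweq (g y) hgy]; simp [hg]
    exact hmono.injOn (hwpos (g y) hgy) hy h1
  have hganti : StrictAntiOn g (Set.Ioi 0) := by
    intro a ha b hb hab
    simpa [hg] using neg_lt_neg (hmono ha hb hab)
  -- w is strictly antitone on Ioi 0
  have hwanti : StrictAntiOn w (Set.Ioi 0) := by
    intro a ha b hb hab
    by_contra h
    push_neg at h
    have hwa := hwpos a ha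
    have hwb := hwpos b hb
    have : g (w b) ≤ g (w a) := by
      rcases eq_or_lt_of_le h with h1 | h1
      · rw [h1]
      · exact le_of_lt (hganti hwa hwb h1)
    rw [hgw a ha, hgw b hb] at this
    exact absurd this (not_le.mpr hab)
  have hwimage : w '' Set.Ioi 0 = Set.Ioi 0 := by
    apply Set.Subset.antisymm
    · rintro _ ⟨x, hx, rfl⟩
      exact hwpos x hx
    · intro y hy
      exact ⟨g y, hgpos y hy, hwg y hy⟩
  -- continuity of w on Ioi 0
  have hwcont : ∀ x > (0:ℝ), ContinuousAt w x := by
    intro x hx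
    have : StrictMonoOn (fun z => OrderDual.toDual (w z)) (Set.Ioi 0) := by
      intro a ha b hb hab
      exact hwanti ha hb hab
    have himg : (fun z => OrderDual.toDual (w z)) '' Set.Ioi 0 ∈
        nhds (OrderDual.toDual (w x)) := by
      have h1 : (fun z => OrderDual.toDual (w z)) '' Set.Ioi 0
          = OrderDual.toDual '' (w '' Set.Ioi 0) := Set.image_comp _ _ _
      have h2 : (OrderDual.toDual : ℝ → ℝᵒᵈ) '' Set.Ioi 0
          = OrderDual.ofDual ⁻¹' Set.Ioi 0 := Equiv.image_eq_preimage_symm _ _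
      rw [h1, hwimage, h2]
      refine (isOpen_Ioi.preimage continuous_ofDual).mem_nhds ?_
      exact hwpos x hx
    exact this.continuousAt_of_image_mem_nhds (isOpen_Ioi.mem_nhds hx) himg
  -- derivative of w
  have hwderiv : ∀ x > (0:ℝ), HasDerivAt w (-(dv 2 (w x)))⁻¹ x := by
    intro x hx
    have hgd : HasDerivAt g (-(dv 2 (w x))) (w x) := (hderiv 1 (w x) (hwpos x hx)).neg
    have hne : -(dv 2 (w x)) ≠ 0 := by
      have := hpos2 (w x) (hwpos x hx); linarith
    have hev : ∀ᶠ z in nhds x, g (w z) = z := by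
      filter_upwards [(isOpen_Ioi).mem_nhds hx] with z hz
      exact hgw z hz
    exact HasDerivAt.of_local_left_inverse (hwcont x hx) hgd hne hev
  -- the infimum formula
  have hukey : ∀ x > (0:ℝ), ∀ y > (0:ℝ), v (w x) + x * w x ≤ v y + x * y := by
    intro x hx y hy
    set φ : ℝ → ℝ := fun y => v y + x * y with hφ
    have hφd : ∀ z > (0:ℝ), HasDerivAt φ (dv 1 z + x) z := by
      intro z hz
      have h1 : HasDerivAt v (dv 1 z) z := hdv0 ▸ hderiv 0 z hz
      have h2 : HasDerivAt (fun y : ℝ => x * y) (x * 1) z := (hasDerivAt_id z).const_mul x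
      have h3 := h1.add h2; rw [mul_one] at h3; exact h3
    rcases lt_trichotomy y (w x) with hlt | heq | hgt
    · -- φ strictly antitone on Ioc 0 (w x)
      have : StrictAntiOn φ (Set.Ioc 0 (w x)) := by
        apply strictAntiOn_of_deriv_neg (convex_Ioc 0 (w x))
        · intro z hz
          exact ((hφd z hz.1).continuousAt).continuousWithinAt
        · intro z hz
          rw [interior_Ioc] at hz
          rw [(hφd z hz.1).deriv]
          have : dv 1 z < dv 1 (w x) := hmono hz.1 (hwpos x hx) hz.2
          rw [hweq x hx] at this
          linarith
      have := this ⟨hy, le_of_lt hlt⟩ ⟨hwpos x hx, le_rfl⟩ hlt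
      exact le_of_lt this
    · rw [heq]
    · -- φ strictly monotone on Ici (w x)
      have : StrictMonoOn φ (Set.Ici (w x)) := by
        apply strictMonoOn_of_deriv_pos (convex_Ici (w x))
        · intro z hz
          exact ((hφd z (lt_of_lt_of_le (hwpos x hx) hz)).continuousAt).continuousWithinAt
        · intro z hz
          rw [interior_Ici] at hz
          rw [(hφd z (lt_trans (hwpos x hx) hz)).deriv]
          have : dv 1 (w x) < dv 1 z := hmono (hwpos x hx) (lt_trans (hwpos x hx) hz) hz
          rw [hweq x hx] at this
          linarith
      exact le_of_lt (this Set.self_mem_Ici (le_of_lt hgt) hgt)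
  have huval : ∀ x > (0:ℝ), u x = v (w x) + x * w x := by
    intro x hx
    rw [hu x]
    apply le_antisymm
    · apply csInf_le
      · exact ⟨v (w x) + x * w x, by rintro _ ⟨y, hy, rfl⟩; exact hukey x hx y hy⟩
      · exact ⟨w x, hwpos x hx, rfl⟩
    · apply le_csInf (Set.Nonempty.image _ ⟨1, Set.mem_Ioi.mpr one_pos⟩)
      rintro _ ⟨y, hy, rfl⟩
      exact hukey x hx y hy
  -- derivative of u
  have huderiv : ∀ x > (0:ℝ), HasDerivAt u (w x) x := by
    intro x hx
    have hU : HasDerivAt (fun z => v (w z) + z * w z) (w x) x := by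
      have h1 : HasDerivAt v (dv 1 (w x)) (w x) := hdv0 ▸ hderiv 0 (w x) (hwpos x hx)
      have h2 := hwderiv x hx
      have h3 : HasDerivAt (fun z => v (w z)) (dv 1 (w x) * (-(dv 2 (w x)))⁻¹) x :=
        h1.comp x h2
      have h4 : HasDerivAt (fun z => z * w z) (1 * w x + x * (-(dv 2 (w x)))⁻¹) x :=
        (hasDerivAt_id x).mul h2
      have h5 := h3.add h4
      have : dv 1 (w x) * (-(dv 2 (w x)))⁻¹ + (1 * w x + x * (-(dv 2 (w x)))⁻¹) = w x := by
        rw [hweq x hx]; ring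
      rwa [this] at h5
    apply hU.congr_of_eventuallyEq
    filter_upwards [(isOpen_Ioi).mem_nhds hx] with z hz
    exact huval z hz
  -- analyticity
  have hanal1 : ∀ y > (0:ℝ), AnalyticAt ℝ (dv 1) y := by
    intro y hy
    have hd : AnalyticOnNhd ℝ (deriv v) (Set.Ioi 0) := hanal.deriv
    have := hd y hy
    apply this.congr
    filter_upwards [(isOpen_Ioi).mem_nhds hy] with z hz
    exact ((hdv0 ▸ hderiv 0 z hz : HasDerivAt v (dv 1 z) z)).deriv
  have hganal : ∀ y > (0:ℝ), AnalyticAt ℝ g y := fun y hy => (hanal1 y hy).neg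
  -- partial homeomorph for g
  have hgcont : ContinuousOn g (Set.Ioi 0) := fun y hy =>
    ((hderiv 1 y hy).neg.continuousAt).continuousWithinAt
  have hwcontOn : ContinuousOn w (Set.Ioi 0) := fun x hx => (hwcont x hx).continuousWithinAt
  let f : OpenPartialHomeomorph ℝ ℝ :=
    { toFun := g
      invFun := w
      source := Set.Ioi 0
      target := Set.Ioi 0
      map_source' := fun y hy => hgpos y hy
      map_target' := fun x hx => hwpos x hx
      left_inv' := fun y hy => hwg y hy
      right_inv' := fun x hx => hgw x hx
      open_source := isOpen_Ioi
      open_target := isOpen_Ioi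
      continuousOn_toFun := hgcont
      continuousOn_invFun := hwcontOn }
  have hwanal : ∀ x > (0:ℝ), AnalyticAt ℝ w x := by
    intro x hx
    have hwx : 0 < w x := hwpos x hx
    have hgd : HasDerivAt g (-(dv 2 (w x))) (w x) := (hderiv 1 (w x) hwx).neg
    have hne : -(dv 2 (w x)) ≠ 0 := by
      have := hpos2 (w x) hwx; linarith
    set c : ℝˣ := Units.mk0 _ hne with hc
    have hfd : fderiv ℝ g (w x) = (ContinuousLinearEquiv.unitsEquivAut ℝ c : ℝ ≃L[ℝ] ℝ) := by
      rw [hgd.hasFDerivAt.fderiv]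
      ext
      simp [ContinuousLinearEquiv.unitsEquivAut_apply, hc, mul_comm]
    have hsymm : f.symm = w := rfl
    have hfw : f.symm x = w x := rfl
    have := f.analyticAt_symm (i := ContinuousLinearEquiv.unitsEquivAut ℝ c)
      (Set.mem_Ioi.mpr hx) (by rw [hfw]; exact hganal (w x) hwx) (by rw [hfw]; exact hfd)
    rwa [hsymm] at this
  have huanal : AnalyticOnNhd ℝ u (Set.Ioi 0) := by
    intro x hx
    have h1 : AnalyticAt ℝ (fun z => v (w z) + z * w z) x := by
      have hv : AnalyticAt ℝ v (w x) := hanal (w x) (hwpos x hx)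
      exact (hv.comp (hwanal x hx)).add ((analyticAt_id).mul (hwanal x hx))
    apply h1.congr
    filter_upwards [(isOpen_Ioi).mem_nhds hx] with z hz
    exact (huval z hz).symm
  refine ⟨huanal, ?_, ?_, w, fun x hx => huderiv x hx, ?_, ?_, ?_, ?_⟩
  · -- strict mono
    apply strictMonoOn_of_deriv_pos (convex_Ioi 0)
    · exact fun x hx => ((huderiv x hx).continuousAt).continuousWithinAt
    · intro x hx
      rw [interior_Ioi] at hx
      rw [(huderiv x hx).deriv]
      exact hwpos x hx
  · -- strict concave
    apply StrictAntiOn.strictConcaveOn_of_deriv (convex_Ioi 0)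
    · exact fun x hx => ((huderiv x hx).continuousAt).continuousWithinAt
    · rw [interior_Ioi]
      intro a ha b hb hab
      rw [(huderiv a ha).deriv, (huderiv b hb).deriv]
      exact hwanti ha hb hab
  · -- Inada at 0
    rw [tendsto_atTop]
    intro M
    set M' : ℝ := max M 1 with hM'
    have hM'pos : (0:ℝ) < M' := lt_of_lt_of_le one_pos (le_max_right _ _)
    have hgM' : 0 < g M' := hgpos M' hM'pos
    have : Set.Ioo (0:ℝ) (g M') ∈ nhdsWithin 0 (Set.Ioi 0) :=
      Ioo_mem_nhdsGT_of_mem ⟨le_rfl, hgM'⟩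
    filter_upwards [this] with x hx
    have hxpos : 0 < x := hx.1
    have : M' < w x := by
      by_contra h
      push_neg at h
      have : g M' ≤ g (w x) := by
        rcases eq_or_lt_of_le h with h1 | h1
        · rw [h1]
        · exact le_of_lt (hganti (hwpos x hxpos) hM'pos h1)
      rw [hgw x hxpos] at this
      exact absurd this (not_le.mpr hx.2)
    exact le_of_lt (lt_of_le_of_lt (le_max_left M 1) this)
  · -- Inada at ∞
    rw [NormedAddCommGroup.tendsto_nhds_zero]
    intro ε hε
    have hgε : 0 < g ε := hgpos ε hε
    filter_upwards [eventually_gt_atTop (max (g ε) 0)] with x hx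
    have hxpos : 0 < x := lt_of_le_of_lt (le_max_right _ _) hx
    have hxgε : g ε < x := lt_of_le_of_lt (le_max_left _ _) hx
    have hwx : 0 < w x := hwpos x hxpos
    have : w x < ε := by
      by_contra h
      push_neg at h
      have : g (w x) ≤ g ε := by
        rcases eq_or_lt_of_le h with h1 | h1
        · rw [h1]
        · exact le_of_lt (hganti hε hwx h1)
      rw [hgw x hxpos] at this
      exact absurd this (not_le.mpr hxgε)
    rw [Real.norm_eq_abs, abs_of_pos hwx]
    exact this
  · exact fun y hy => hwg y hy
  · intro x hx
    rw [hweq x hx]; ring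
end

section
/- There exist a constant C > 0 and a real-analytic function f : (0,∞) → ℝ such that: (i) 1 ≤ f(y) ≤ 2 for every y > 0; (ii) f′(y) < 0 for every y > 0; and (iii) −f′(i) ≥ i²/C for every positive integer i. -/
open MeasureTheory Filter Set Topology

noncomputable section Stmt11Aux

/-- bump steepness -/
def bb (n : ℕ) : ℝ := (n : ℝ)^2 * 2^n

lemma bb_nonneg (n : ℕ) : 0 ≤ bb n := by rw [bb]; positivity

lemma bb_ge (n : ℕ) (hn : 1 ≤ n) : (2:ℝ)^n ≤ bb n := by
  have : (1:ℝ) ≤ (n:ℝ)^2 := by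
    have : (1:ℝ) ≤ (n:ℝ) := by exact_mod_cast hn
    nlinarith
  have h2 : (0:ℝ) < 2^n := by positivity
  calc (2:ℝ)^n = 1 * 2^n := (one_mul _).symm
  _ ≤ (n:ℝ)^2 * 2^n := by nlinarith

def gg (n : ℕ) (y : ℝ) : ℝ := (1/2:ℝ)^n * Real.arctan (bb n * (y - (n:ℝ)))

def gg' (n : ℕ) (y : ℝ) : ℝ :=
  (1/2:ℝ)^n * (1 / (1 + (bb n * (y - (n:ℝ)))^2) * bb n)

def HH (y : ℝ) : ℝ := ∑' n, gg n y

def HH' (y : ℝ) : ℝ := ∑' n, gg' n y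

lemma gg_hasDeriv (n : ℕ) (y : ℝ) : HasDerivAt (fun z => gg n z) (gg' n y) y := by
  have h1 : HasDerivAt (fun z : ℝ => bb n * (z - (n:ℝ))) (bb n) y := by
    simpa using ((hasDerivAt_id y).sub_const ((n:ℝ))).const_mul (bb n)
  have h2 := (Real.hasDerivAt_arctan (bb n * (y - (n:ℝ)))).comp y h1
  simpa [gg, gg', Function.comp] using h2.const_mul ((1/2:ℝ)^n)

lemma gg'_nonneg (n : ℕ) (y : ℝ) : 0 ≤ gg' n y := by
  have := bb_nonneg n
  have h : (0:ℝ) < 1 + (bb n * (y - (n:ℝ)))^2 := by positivity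
  have h2 : 0 ≤ 1 / (1 + (bb n * (y - (n:ℝ)))^2) * bb n :=
    mul_nonneg (by positivity) (bb_nonneg n)
  exact mul_nonneg (by positivity) h2

lemma gg_abs_le (n : ℕ) (y : ℝ) : |gg n y| ≤ (1/2:ℝ)^n * (Real.pi/2) := by
  rw [gg, abs_mul, abs_of_nonneg (by positivity : (0:ℝ) ≤ (1/2:ℝ)^n)]
  gcongr
  exact abs_le.mpr ⟨(Real.neg_pi_div_two_lt_arctan _).le, (Real.arctan_lt_pi_div_two _).le⟩

lemma summable_bound : Summable (fun n : ℕ => (1/2:ℝ)^n * (Real.pi/2)) :=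
  summable_geometric_two.mul_right _

lemma summable_gg (y : ℝ) : Summable (fun n => gg n y) := by
  refine Summable.of_norm_bounded summable_bound (fun n => ?_)
  simpa [Real.norm_eq_abs] using gg_abs_le n y

lemma gg'_le_sq (n : ℕ) (y : ℝ) : gg' n y ≤ (n:ℝ)^2 := by
  have h : (0:ℝ) < 1 + (bb n * (y - (n:ℝ)))^2 := by positivity
  have h1 : 1 / (1 + (bb n * (y - (n:ℝ)))^2) ≤ 1 := by
    rw [div_le_one h]; nlinarith [sq_nonneg (bb n * (y - (n:ℝ)))]
  have hb := bb_nonneg n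
  calc gg' n y ≤ (1/2:ℝ)^n * (1 * bb n) := by
        rw [gg']; gcongr
  _ = (n:ℝ)^2 * ((1/2:ℝ)^n * 2^n) := by rw [bb]; ring
  _ = (n:ℝ)^2 * 1 := by
        rw [← mul_pow]; norm_num
  _ = (n:ℝ)^2 := mul_one _

lemma gg'_far (n : ℕ) (y : ℝ) (hn : 1 ≤ n) (hy : y + 1 ≤ (n:ℝ)) :
    gg' n y ≤ (1/4:ℝ)^n := by
  have hb : (2:ℝ)^n ≤ bb n := bb_ge n hn
  have hbpos : (0:ℝ) < bb n := lt_of_lt_of_le (by positivity) hb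
  have hd : (1:ℝ) ≤ ((n:ℝ) - y) := by linarith
  have hsq : bb n ^ 2 ≤ (bb n * (y - (n:ℝ)))^2 := by
    have : bb n * 1 ≤ bb n * ((n:ℝ) - y) := by nlinarith
    have h2 : (bb n * (y - (n:ℝ)))^2 = (bb n * ((n:ℝ) - y))^2 := by ring
    rw [h2]
    nlinarith
  have h : (0:ℝ) < 1 + (bb n * (y - (n:ℝ)))^2 := by positivity
  have h1 : 1 / (1 + (bb n * (y - (n:ℝ)))^2) ≤ 1 / bb n ^ 2 := by
    apply div_le_div_of_nonneg_left (by norm_num) (by positivity)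
    nlinarith
  calc gg' n y ≤ (1/2:ℝ)^n * (1 / bb n ^ 2 * bb n) := by
        rw [gg']; gcongr
  _ = (1/2:ℝ)^n * (1 / bb n) := by field_simp
  _ ≤ (1/2:ℝ)^n * (1 / 2^n) := by
        gcongr
  _ = (1/4:ℝ)^n := by
        field_simp
        rw [← mul_pow]
        norm_num


/-- the derivative-bound sequence adapted to a point `x` -/
def uu (x : ℝ) (n : ℕ) : ℝ := (if n < ⌈x⌉₊ + 2 then (n:ℝ)^2 else 0) + (1/4:ℝ)^n

lemma summable_uu (x : ℝ) : Summable (uu x) := by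
  apply Summable.add
  · apply summable_of_ne_finset_zero (s := Finset.range (⌈x⌉₊ + 2))
    intro n hn
    rw [Finset.mem_range] at hn
    simp [if_neg hn]
  · exact summable_geometric_of_lt_one (by norm_num) (by norm_num)

lemma gg'_le_uu (x : ℝ) (n : ℕ) (y : ℝ) (hy : y ∈ Set.Ioo (x-1) (x+1)) :
    ‖gg' n y‖ ≤ uu x n := by
  rw [Real.norm_eq_abs, abs_of_nonneg (gg'_nonneg n y), uu]
  by_cases hn : n < ⌈x⌉₊ + 2
  · rw [if_pos hn]
    have := gg'_le_sq n y
    have h4 : (0:ℝ) ≤ (1/4:ℝ)^n := by positivity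
    linarith
  · rw [if_neg hn]
    push_neg at hn
    have hn1 : 1 ≤ n := by omega
    have hcx : x ≤ (⌈x⌉₊ : ℝ) := Nat.le_ceil x
    have hnn : ((⌈x⌉₊ + 2 : ℕ) : ℝ) ≤ (n:ℝ) := by exact_mod_cast hn
    have : y + 1 ≤ (n:ℝ) := by
      have := hy.2
      push_cast at hnn
      linarith
    have := gg'_far n y hn1 this
    linarith

lemma summable_gg' (y : ℝ) : Summable (fun n => gg' n y) := by
  refine Summable.of_norm_bounded (summable_uu y) (fun n => ?_)
  exact gg'_le_uu y n y (by constructor <;> linarith)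

lemma HH_hasDeriv (x : ℝ) : HasDerivAt HH (HH' x) x := by
  have hx : x ∈ Set.Ioo (x-1) (x+1) := by constructor <;> linarith
  exact hasDerivAt_tsum_of_isPreconnected (summable_uu x) isOpen_Ioo
    isPreconnected_Ioo (fun n y _ => gg_hasDeriv n y)
    (fun n y hy => gg'_le_uu x n y hy) hx (summable_gg x) hx

lemma HH'_pos (y : ℝ) : 0 < HH' y := by
  refine Summable.tsum_pos (summable_gg' y) (fun n => gg'_nonneg n y) 1 ?_
  rw [gg']
  have hb : (0:ℝ) < bb 1 := by rw [bb]; norm_num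
  have h : (0:ℝ) < 1 + (bb 1 * (y - (1:ℕ)))^2 := by positivity
  positivity

lemma HH'_spike (i : ℕ) : (i:ℝ)^2 ≤ HH' i := by
  have h := Summable.le_tsum (summable_gg' (i:ℝ)) i (fun j _ => gg'_nonneg j (i:ℝ))
  have : gg' i (i:ℝ) = (i:ℝ)^2 := by
    rw [gg']
    simp only [sub_self, mul_zero]
    norm_num
    rw [bb, ← mul_assoc, mul_comm ((1/2:ℝ)^i), mul_assoc, ← mul_pow]
    norm_num
  rw [this] at h
  exact h

lemma HH_abs_le (y : ℝ) : |HH y| ≤ Real.pi := by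
  have h1 : ‖HH y‖ ≤ ∑' n, ‖gg n y‖ :=
    norm_tsum_le_tsum_norm ((summable_gg y).abs)
  have h2 : ∑' n, ‖gg n y‖ ≤ ∑' n, (1/2:ℝ)^n * (Real.pi/2) := by
    refine Summable.tsum_le_tsum (fun n => ?_) ((summable_gg y).abs) summable_bound
    simpa [Real.norm_eq_abs] using gg_abs_le n y
  have h3 : ∑' n : ℕ, (1/2:ℝ)^n * (Real.pi/2) = Real.pi := by
    rw [tsum_mul_right, tsum_geometric_two]
    ring
  rw [Real.norm_eq_abs] at h1
  linarith
open Complex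

lemma arg_one_add_mul_I (t : ℝ) : (1 + (t:ℂ)*Complex.I).arg = Real.arctan t := by
  have habs : ‖1 + (t:ℂ)*Complex.I‖ = Real.sqrt (1 + t^2) := by
    rw [Complex.norm_def, Complex.normSq_apply]
    simp
    ring_nf
  rw [Complex.arg, if_pos (by simp : 0 ≤ (1 + (t:ℂ)*Complex.I).re)]
  rw [habs]
  simp only [Complex.add_im, Complex.one_im, Complex.mul_im, Complex.ofReal_re,
    Complex.I_im, Complex.ofReal_im, Complex.I_re, mul_zero, mul_one, zero_add, add_zero]
  rw [Real.arctan_eq_arcsin]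

lemma key_log (t : ℝ) :
    (-Complex.I/2) * (Complex.log (1 + (t:ℂ)*Complex.I) - Complex.log (1 - (t:ℂ)*Complex.I))
      = ((Real.arctan t : ℝ) : ℂ) := by
  have hconj : (1 - (t:ℂ)*Complex.I) = (starRingEnd ℂ) (1 + (t:ℂ)*Complex.I) := by
    rw [map_add, map_one, map_mul, Complex.conj_ofReal, Complex.conj_I]; ring
  have hargne : (1 + (t:ℂ)*Complex.I).arg ≠ Real.pi := by
    intro hcon
    have h := Complex.arg_eq_pi_iff.mp hcon
    norm_num at h
  rw [hconj, Complex.log_conj _ hargne, Complex.sub_conj, Complex.log_im, arg_one_add_mul_I]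
  push_cast
  ring_nf
  rw [Complex.I_sq]
  ring

def nn0 (x : ℝ) : ℕ := (round x).toNat
def rr (x : ℝ) : ℝ := min (1/4) (1/(2*(bb (nn0 x)+1)))

lemma rr_pos (x : ℝ) : 0 < rr x := by
  apply lt_min (by norm_num)
  have := bb_nonneg (nn0 x)
  positivity

lemma rr_le (x : ℝ) : rr x ≤ 1/4 := min_le_left _ _

lemma bb_rr_le (x : ℝ) : bb (nn0 x) * rr x ≤ 1/2 := by
  have h1 : rr x ≤ 1/(2*(bb (nn0 x)+1)) := min_le_right _ _
  have h0 := bb_nonneg (nn0 x)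
  have hpos : (0:ℝ) < 2*(bb (nn0 x)+1) := by positivity
  have := mul_le_mul_of_nonneg_left h1 h0
  have h2 : bb (nn0 x) * (1/(2*(bb (nn0 x)+1))) ≤ 1/2 := by
    rw [mul_one_div, div_le_div_iff₀ hpos (by norm_num)]
    nlinarith
  linarith

lemma nn0_cast (x : ℝ) (hx : 0 < x) : ((nn0 x : ℕ) : ℝ) = ((round x : ℤ) : ℝ) := by
  rw [nn0]
  norm_cast
  exact Int.toNat_of_nonneg (by
    rw [round_eq]
    exact Int.le_floor.mpr (by push_cast; linarith))

lemma near_nn0 (x : ℝ) (hx : 0 < x) : |x - (nn0 x : ℝ)| ≤ 1/2 := by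
  rw [nn0_cast x hx]; exact abs_sub_round x

lemma far_nn0 (x : ℝ) (hx : 0 < x) (n : ℕ) (hne : n ≠ nn0 x) : 1/2 ≤ |x - (n:ℝ)| := by
  have h1 : (1:ℝ) ≤ |((nn0 x : ℝ)) - (n:ℝ)| := by
    rw [nn0_cast x hx]
    have : (round x) - (n:ℤ) ≠ 0 := by
      intro hcon
      apply hne
      have : (round x) = (n:ℤ) := by omega
      rw [nn0, this]; simp
    have h2 : (1:ℤ) ≤ |round x - (n:ℤ)| := Int.one_le_abs this
    calc (1:ℝ) ≤ ((|round x - (n:ℤ)| : ℤ) : ℝ) := by exact_mod_cast h2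
    _ = |((round x : ℤ):ℝ) - (n:ℝ)| := by push_cast; rfl
  have h2 := near_nn0 x hx
  have := abs_sub_abs_le_abs_sub ((nn0 x : ℝ) - (n:ℝ)) ((nn0 x:ℝ) - x)
  have h3 : |(nn0 x:ℝ) - (n:ℝ)| - |(nn0 x:ℝ) - x| ≤ |x - (n:ℝ)| := by
    calc |(nn0 x:ℝ) - (n:ℝ)| - |(nn0 x:ℝ) - x| ≤ |((nn0 x:ℝ) - (n:ℝ)) - ((nn0 x:ℝ) - x)| :=
      abs_sub_abs_le_abs_sub _ _
    _ = |x - (n:ℝ)| := by ring_nf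
  rw [abs_sub_comm] at h2
  linarith

def GGc (n : ℕ) (z : ℂ) : ℂ := ((1:ℂ)/2)^n * (-Complex.I/2) *
  (Complex.log (1 + (bb n:ℂ)*(z - (n:ℕ))*Complex.I)
    - Complex.log (1 - (bb n:ℂ)*(z - (n:ℕ))*Complex.I))

def GG (z : ℂ) : ℂ := ∑' n, GGc n z

lemma re_plus (n : ℕ) (z : ℂ) :
    (1 + (bb n:ℂ)*(z - (n:ℕ))*Complex.I).re = 1 - bb n * z.im := by
  simp [Complex.mul_re, Complex.mul_im]
  ring

lemma im_plus (n : ℕ) (z : ℂ) :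
    (1 + (bb n:ℂ)*(z - (n:ℕ))*Complex.I).im = bb n * (z.re - (n:ℝ)) := by
  simp [Complex.mul_re, Complex.mul_im]

lemma re_minus (n : ℕ) (z : ℂ) :
    (1 - (bb n:ℂ)*(z - (n:ℕ))*Complex.I).re = 1 + bb n * z.im := by
  simp [Complex.mul_re, Complex.mul_im]

lemma im_minus (n : ℕ) (z : ℂ) :
    (1 - (bb n:ℂ)*(z - (n:ℕ))*Complex.I).im = -(bb n * (z.re - (n:ℝ))) := by
  simp [Complex.mul_re, Complex.mul_im]




/-- membership in slit plane and abs lower bound, for both signs -/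
lemma good_plus (x : ℝ) (hx : 0 < x) (z : ℂ) (hz : z ∈ Metric.ball (x:ℂ) (rr x)) (n : ℕ)
    (v : ℂ) (hre : v.re = 1 - bb n * z.im ∨ v.re = 1 + bb n * z.im)
    (him : v.im = bb n * (z.re - (n:ℝ)) ∨ v.im = -(bb n * (z.re - (n:ℝ)))) :
    v ∈ Complex.slitPlane ∧ 1/2 ≤ ‖v‖ := by
  rw [Metric.mem_ball, Complex.dist_eq] at hz
  have him_z : |z.im| < rr x := by
    have h := Complex.abs_im_le_norm (z - (x:ℂ))
    simp at h
    linarith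
  have hre_z : |z.re - x| < rr x := by
    have h := Complex.abs_re_le_norm (z - (x:ℂ))
    simp at h
    linarith
  have hrele : ∀ w : ℂ, |w.re| ≤ ‖w‖ := fun w => Complex.abs_re_le_norm w
  have himle : ∀ w : ℂ, |w.im| ≤ ‖w‖ := fun w => Complex.abs_im_le_norm w
  by_cases hcase : n = nn0 x
  · -- near integer: real part close to 1
    have h1 : bb n * |z.im| ≤ 1/2 := by
      rw [hcase]
      have h2 := bb_rr_le x
      have h3 := mul_le_mul_of_nonneg_left him_z.le (bb_nonneg (nn0 x))
      linarith
    have habs : |bb n * z.im| ≤ 1/2 := by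
      rw [abs_mul, _root_.abs_of_nonneg (bb_nonneg _)]
      exact h1
    have hrepos : (1:ℝ)/2 ≤ v.re := by
      rcases hre with h | h <;> rw [h] <;> cases' abs_le.mp habs with hl hr <;> linarith
    constructor
    · exact Or.inl (by linarith)
    · calc (1:ℝ)/2 ≤ v.re := hrepos
      _ ≤ |v.re| := le_abs_self _
      _ ≤ ‖v‖ := hrele v
  · rcases Nat.eq_zero_or_pos n with hn0 | hn1
    · -- n = 0 : v = 1 ± 0
      subst hn0
      have hb0 : bb 0 = 0 := by rw [bb]; norm_num
      have hre1 : v.re = 1 := by rcases hre with h | h <;> rw [h, hb0] <;> ring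
      constructor
      · exact Or.inl (by rw [hre1]; norm_num)
      · calc (1:ℝ)/2 ≤ |v.re| := by rw [hre1]; norm_num
        _ ≤ ‖v‖ := hrele v
    · -- far integer: imaginary part large
      have hfar := far_nn0 x hx n hcase
      have hzre : 1/4 ≤ |z.re - (n:ℝ)| := by
        have h3 : |x - (n:ℝ)| - |x - z.re| ≤ |z.re - (n:ℝ)| := by
          calc |x - (n:ℝ)| - |x - z.re| ≤ |(x - (n:ℝ)) - (x - z.re)| := abs_sub_abs_le_abs_sub _ _
          _ = |z.re - (n:ℝ)| := by ring_nf
        have h4 : |x - z.re| < rr x := by rw [abs_sub_comm]; exact hre_z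
        have := rr_le x
        linarith
      have hbn : (2:ℝ) ≤ bb n := by
        have := bb_ge n hn1
        have h2 : (2:ℝ) = 2^1 := by norm_num
        have h3 : (2:ℝ)^1 ≤ 2^n := by
          apply pow_le_pow_right₀ (by norm_num) hn1
        linarith
      have himlow : 1/2 ≤ |v.im| := by
        have h5 : |bb n * (z.re - (n:ℝ))| = bb n * |z.re - (n:ℝ)| := by
          rw [abs_mul, _root_.abs_of_nonneg (bb_nonneg n)]
        have h6 : bb n * (1/4) ≤ bb n * |z.re - (n:ℝ)| :=
          mul_le_mul_of_nonneg_left hzre (bb_nonneg n)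
        have h7 : (1:ℝ)/2 ≤ bb n * (1/4) := by linarith
        rcases him with h | h <;> rw [h]
        · rw [h5] at *; linarith
        · rw [abs_neg, h5]; linarith
      constructor
      · refine Or.inr (fun hcon => ?_)
        rw [hcon] at himlow; simp at himlow; linarith
      · exact le_trans himlow (himle v)

lemma abs_upper (x : ℝ) (hx : 0 < x) (z : ℂ) (hz : z ∈ Metric.ball (x:ℂ) (rr x)) (n : ℕ)
    (s : ℝ) (hs : s = 1 ∨ s = -1) :
    ‖1 + (s:ℂ) * ((bb n:ℂ)*(z - (n:ℕ))*Complex.I)‖ ≤ 1 + bb n * ((n:ℝ) + x + 1) := by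
  rw [Metric.mem_ball, Complex.dist_eq] at hz
  have h1 : ‖(s:ℂ) * ((bb n:ℂ)*(z - (n:ℕ))*Complex.I)‖
      = bb n * ‖z - (n:ℕ)‖ := by
    simp only [norm_mul, Complex.norm_real, Complex.norm_I, mul_one]
    rcases hs with h | h <;> rw [h] <;>
      simp [_root_.abs_of_nonneg (bb_nonneg n)]
  have h2 : ‖z - (n:ℕ)‖ ≤ (n:ℝ) + x + 1 := by
    have h3 : z - (n:ℕ) = (z - (x:ℂ)) + ((x:ℂ) - (n:ℕ)) := by ring
    have h4 : ‖(x:ℂ) - (n:ℕ)‖ = |x - (n:ℝ)| := by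
      rw [show (x:ℂ) - (n:ℕ) = ((x - (n:ℝ) : ℝ):ℂ) by push_cast; ring, Complex.norm_real, Real.norm_eq_abs]
    have h5 : |x - (n:ℝ)| ≤ x + (n:ℝ) := by
      have h6 : |x - (n:ℝ)| ≤ |x| + |(n:ℝ)| := by
        calc |x - (n:ℝ)| = |x + -(n:ℝ)| := by ring_nf
        _ ≤ |x| + |(-(n:ℝ))| := abs_add_le _ _
        _ = |x| + |(n:ℝ)| := by rw [abs_neg]
      rw [_root_.abs_of_pos hx, Nat.abs_cast] at h6
      linarith
    calc ‖z - (n:ℕ)‖ ≤ ‖z - (x:ℂ)‖ + ‖(x:ℂ) - (n:ℕ)‖ := by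
          rw [h3]; exact norm_add_le _ _
    _ ≤ rr x + (x + (n:ℝ)) := by rw [h4]; have := rr_le x; linarith [hz]
    _ ≤ (n:ℝ) + x + 1 := by have := rr_le x; linarith
  calc ‖1 + (s:ℂ) * ((bb n:ℂ)*(z - (n:ℕ))*Complex.I)‖
      ≤ 1 + ‖(s:ℂ) * ((bb n:ℂ)*(z - (n:ℕ))*Complex.I)‖ := by
        have := norm_add_le (1:ℂ) ((s:ℂ) * ((bb n:ℂ)*(z - (n:ℕ))*Complex.I))
        simpa using this
  _ = 1 + bb n * ‖z - (n:ℕ)‖ := by rw [h1]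
  _ ≤ 1 + bb n * ((n:ℝ) + x + 1) := by
        have := mul_le_mul_of_nonneg_left h2 (bb_nonneg n)
        linarith

lemma norm_log_le (v : ℂ) (hlow : 1/2 ≤ ‖v‖) (A : ℝ) (hA : 1 ≤ A)
    (hup : ‖v‖ ≤ A) :
    ‖Complex.log v‖ ≤ Real.log A + Real.log 2 + Real.pi := by
  have hvpos : 0 < ‖v‖ := by linarith
  have h1 : ‖Complex.log v‖ ≤ |(Complex.log v).re| + |(Complex.log v).im| :=
    Complex.norm_le_abs_re_add_abs_im _
  rw [Complex.log_re, Complex.log_im] at h1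
  have harg : |v.arg| ≤ Real.pi := Complex.abs_arg_le_pi v
  have hlog1 : Real.log (‖v‖) ≤ Real.log A := Real.log_le_log hvpos hup
  have hlog2 : -Real.log (‖v‖) ≤ Real.log 2 := by
    rw [← Real.log_inv]
    apply Real.log_le_log (inv_pos.mpr hvpos)
    rw [inv_le_comm₀ hvpos (by norm_num : (0:ℝ) < 2)] at *
    · linarith
  have hA0 : 0 ≤ Real.log A := Real.log_nonneg hA
  have h20 : 0 ≤ Real.log 2 := Real.log_nonneg (by norm_num)
  have habs : |Real.log (‖v‖)| ≤ Real.log A + Real.log 2 := by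
    rw [abs_le]; constructor <;> linarith
  linarith


def uuC (x : ℝ) (n : ℕ) : ℝ :=
  (1/2:ℝ)^n * ((n:ℝ)*Real.log 2 + (n:ℝ)^2*((n:ℝ)+x+1) + Real.log 2 + Real.pi)

lemma summable_uuC (x : ℝ) : Summable (uuC x) := by
  have h : ‖(1/2:ℝ)‖ < 1 := by rw [Real.norm_eq_abs]; rw [abs_of_pos (by norm_num : (0:ℝ) < 1/2)]; norm_num
  have s1 := summable_pow_mul_geometric_of_norm_lt_one (R := ℝ) 1 h
  have s2 := summable_pow_mul_geometric_of_norm_lt_one (R := ℝ) 2 h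
  have s3 := summable_pow_mul_geometric_of_norm_lt_one (R := ℝ) 3 h
  have s0 : Summable (fun n : ℕ => (1/2:ℝ)^n) := summable_geometric_two
  refine ((((s1.mul_left (Real.log 2)).add s3).add (s2.mul_left (x+1))).add
    (s0.mul_left (Real.log 2 + Real.pi))).congr (fun n => ?_)
  rw [uuC]; ring

lemma GGc_bound (x : ℝ) (hx : 0 < x) (n : ℕ) (z : ℂ)
    (hz : z ∈ Metric.ball (x:ℂ) (rr x)) : ‖GGc n z‖ ≤ uuC x n := by
  set A : ℝ := 1 + bb n * ((n:ℝ)+x+1) with hA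
  have hbn := bb_nonneg n
  have hA1 : 1 ≤ A := by
    have : 0 ≤ bb n * ((n:ℝ)+x+1) := by positivity
    linarith
  have hplus := good_plus x hx z hz n _ (Or.inl (re_plus n z)) (Or.inl (im_plus n z))
  have hminus := good_plus x hx z hz n _ (Or.inr (re_minus n z)) (Or.inr (im_minus n z))
  have hup1 : ‖1 + (bb n:ℂ)*(z - (n:ℕ))*Complex.I‖ ≤ A := by
    have h := abs_upper x hx z hz n 1 (Or.inl rfl)
    rw [hA]
    simpa using h
  have hup2 : ‖1 - (bb n:ℂ)*(z - (n:ℕ))*Complex.I‖ ≤ A := by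
    have h := abs_upper x hx z hz n (-1) (Or.inr rfl)
    rw [hA]
    have he : (1:ℂ) + ((-1:ℝ):ℂ) * ((bb n:ℂ)*(z - (n:ℕ))*Complex.I)
        = 1 - (bb n:ℂ)*(z - (n:ℕ))*Complex.I := by push_cast; ring
    rw [he] at h
    exact h
  have hL1 : ‖Complex.log (1 + (bb n:ℂ)*(z - (n:ℕ))*Complex.I)‖
      ≤ Real.log A + Real.log 2 + Real.pi :=
    norm_log_le _ hplus.2 A hA1 hup1
  have hL2 : ‖Complex.log (1 - (bb n:ℂ)*(z - (n:ℕ))*Complex.I)‖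
      ≤ Real.log A + Real.log 2 + Real.pi :=
    norm_log_le _ hminus.2 A hA1 hup2
  have hnorm1 : ‖((1:ℂ)/2)^n‖ = (1/2:ℝ)^n := by
    rw [norm_pow]; norm_num
  have hnorm2 : ‖-Complex.I/2‖ = (1/2:ℝ) := by
    rw [norm_div, norm_neg, Complex.norm_I]
    simp
  have hsplit : ‖GGc n z‖ ≤ (1/2:ℝ)^n * (Real.log A + Real.log 2 + Real.pi) := by
    rw [GGc, norm_mul, norm_mul, hnorm1, hnorm2]
    have htri := norm_sub_le (Complex.log (1 + (bb n:ℂ)*(z - (n:ℕ))*Complex.I))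
      (Complex.log (1 - (bb n:ℂ)*(z - (n:ℕ))*Complex.I))
    have hp : (0:ℝ) ≤ (1/2:ℝ)^n := by positivity
    nlinarith [norm_nonneg (Complex.log (1 + (bb n:ℂ)*(z - (n:ℕ))*Complex.I)),
      norm_nonneg (Complex.log (1 - (bb n:ℂ)*(z - (n:ℕ))*Complex.I))]
  have h2n : (1:ℝ) ≤ 2^n := by
    calc (1:ℝ) = 1^n := (one_pow n).symm
    _ ≤ 2^n := by gcongr <;> norm_num
  have hApos : (0:ℝ) < A := by linarith
  have hBpos : (0:ℝ) < 1 + (n:ℝ)^2*((n:ℝ)+x+1) := by positivity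
  have hle : A ≤ 2^n * (1 + (n:ℝ)^2*((n:ℝ)+x+1)) := by
    rw [hA, bb]
    have hnx : (0:ℝ) ≤ (n:ℝ)^2*((n:ℝ)+x+1) := by positivity
    nlinarith
  have hlogA : Real.log A ≤ (n:ℝ)*Real.log 2 + (n:ℝ)^2*((n:ℝ)+x+1) := by
    calc Real.log A ≤ Real.log (2^n * (1 + (n:ℝ)^2*((n:ℝ)+x+1))) :=
          Real.log_le_log hApos hle
    _ = Real.log ((2:ℝ)^n) + Real.log (1 + (n:ℝ)^2*((n:ℝ)+x+1)) :=
          Real.log_mul (by positivity) (by positivity)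
    _ = (n:ℝ)*Real.log 2 + Real.log (1 + (n:ℝ)^2*((n:ℝ)+x+1)) := by
          rw [Real.log_pow]
    _ ≤ (n:ℝ)*Real.log 2 + (n:ℝ)^2*((n:ℝ)+x+1) := by
          have := Real.log_le_sub_one_of_pos hBpos
          linarith
  calc ‖GGc n z‖ ≤ (1/2:ℝ)^n * (Real.log A + Real.log 2 + Real.pi) := hsplit
  _ ≤ uuC x n := by
      rw [uuC]
      have hp : (0:ℝ) ≤ (1/2:ℝ)^n := by positivity
      have := mul_le_mul_of_nonneg_left
        (by linarith : Real.log A + Real.log 2 + Real.pi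
          ≤ (n:ℝ)*Real.log 2 + (n:ℝ)^2*((n:ℝ)+x+1) + Real.log 2 + Real.pi) hp
      linarith

lemma GGc_diff (x : ℝ) (hx : 0 < x) (n : ℕ) :
    DifferentiableOn ℂ (GGc n) (Metric.ball (x:ℂ) (rr x)) := by
  intro z hz
  have hplus := good_plus x hx z hz n _ (Or.inl (re_plus n z)) (Or.inl (im_plus n z))
  have hminus := good_plus x hx z hz n _ (Or.inr (re_minus n z)) (Or.inr (im_minus n z))
  have haff1 : DifferentiableAt ℂ (fun z : ℂ => 1 + (bb n:ℂ)*(z-(n:ℕ))*Complex.I) z := by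
    fun_prop
  have haff2 : DifferentiableAt ℂ (fun z : ℂ => 1 - (bb n:ℂ)*(z-(n:ℕ))*Complex.I) z := by
    fun_prop
  have h1 := haff1.clog hplus.1
  have h2 := haff2.clog hminus.1
  exact (((h1.sub h2).const_mul (((1:ℂ)/2)^n * (-Complex.I/2))).congr_of_eventuallyEq
    (Filter.Eventually.of_forall (fun w => by rw [GGc]; rfl))).differentiableWithinAt

lemma GG_diff (x : ℝ) (hx : 0 < x) :
    DifferentiableOn ℂ GG (Metric.ball (x:ℂ) (rr x)) := by
  have htendsto := tendstoUniformlyOn_tsum (summable_uuC x)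
    (fun n z hz => GGc_bound x hx n z hz)
  exact htendsto.tendstoLocallyUniformlyOn.differentiableOn
    (Filter.Eventually.of_forall (fun t z hz =>
      DifferentiableWithinAt.fun_sum (fun i _ => GGc_diff x hx i z hz)))
    Metric.isOpen_ball

lemma GGc_real (n : ℕ) (y : ℝ) : GGc n (y:ℂ) = ((gg n y : ℝ) : ℂ) := by
  rw [GGc, mul_assoc]
  have harg : (bb n:ℂ)*((y:ℂ) - (n:ℕ))*Complex.I
      = ((bb n * (y - (n:ℝ)) : ℝ):ℂ)*Complex.I := by push_cast; ring
  rw [harg, key_log, gg]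
  push_cast
  ring

lemma GG_real (y : ℝ) : GG (y:ℂ) = ((HH y : ℝ):ℂ) := by
  rw [GG, tsum_congr (fun n => GGc_real n y), HH]
  have h := Complex.ofRealCLM.map_tsum (summable_gg y)
  simpa using h.symm

lemma HH_analytic (x : ℝ) (hx : 0 < x) : AnalyticAt ℝ HH x := by
  have hG : AnalyticAt ℂ GG (x:ℂ) :=
    (GG_diff x hx).analyticOnNhd Metric.isOpen_ball (x:ℂ)
      (Metric.mem_ball_self (rr_pos x))
  have h1 : AnalyticAt ℝ (fun y : ℝ => GG ((y:ℝ):ℂ)) x := by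
    have hc := Complex.ofRealCLM.analyticAt x
    exact (hG.restrictScalars (𝕜 := ℝ)).comp hc
  have h2 : AnalyticAt ℝ (fun y : ℝ => (GG ((y:ℝ):ℂ)).re) x :=
    (Complex.reCLM.analyticAt _).comp h1
  refine h2.congr (Filter.Eventually.of_forall (fun y => ?_))
  show (GG ((y:ℝ):ℂ)).re = HH y
  rw [GG_real y]
  simp

end Stmt11Aux

open MeasureTheory Filter Set Topology

/-- There exist a constant `C > 0` and a real-analytic function
`f : (0,∞) → ℝ` such that `1 ≤ f ≤ 2` on `(0,∞)`, `f' < 0` on `(0,∞)` and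
`−f'(i) ≥ i²/C` for every positive integer `i`. -/
theorem stmt11 :
    ∃ (C : ℝ) (f f' : ℝ → ℝ), 0 < C ∧
      AnalyticOnNhd ℝ f (Set.Ioi 0) ∧
      (∀ y > (0:ℝ), HasDerivAt f (f' y) y) ∧
      (∀ y > (0:ℝ), 1 ≤ f y ∧ f y ≤ 2) ∧
      (∀ y > (0:ℝ), f' y < 0) ∧
      (∀ i : ℕ, 1 ≤ i → (i : ℝ) ^ 2 / C ≤ -f' (i : ℝ)) := by
  have hpi := Real.pi_pos
  refine ⟨2*Real.pi, fun y => 3/2 - HH y/(2*Real.pi), fun y => -(HH' y/(2*Real.pi)),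
    by positivity, ?_, ?_, ?_, ?_, ?_⟩
  · intro x hx
    exact analyticAt_const.sub ((HH_analytic x hx).div analyticAt_const (by positivity))
  · intro y _
    exact ((HH_hasDeriv y).div_const (2*Real.pi)).const_sub (3/2)
  · intro y _
    have h2 := abs_le.mp (HH_abs_le y)
    have hpos : (0:ℝ) < 2*Real.pi := by positivity
    constructor
    · have h3 : HH y/(2*Real.pi) ≤ 1/2 := by
        rw [div_le_iff₀ hpos]; linarith [h2.2]
      linarith
    · have h3 : -(1/2:ℝ) ≤ HH y/(2*Real.pi) := by
        rw [le_div_iff₀ hpos]; linarith [h2.1]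
      linarith
  · intro y _
    have h := div_pos (HH'_pos y) (by positivity : (0:ℝ) < 2*Real.pi)
    linarith
  · intro i _
    have h := HH'_spike i
    rw [neg_neg]
    exact (div_le_div_iff_of_pos_right (by positivity)).mpr h
end

section
/- Fix an integer k ≥ 1. Let V : (0,∞) → ℝ be k-times differentiable with (−1)^{k−1} V^(k−1)(y) > 0 and (−1)^k V^(k)(y) ≥ 0 for every y > 0, and suppose there exist constants 0 < c ≤ d < ∞ such that c ≤ −y V^(k)(y)/V^(k−1)(y) ≤ d for every y > 0. Let Ŷ : Ω → (0,∞) be a random variable on a probability space such that E[Ŷ^{k−1} (−1)^{k−1} V^(k−1)(yŶ)] < ∞ for every y > 0. Then the function w(y) := E[Ŷ^{k−1} V^(k−1)(yŶ)] is differentiable on (0,∞) with w′(y) = E[Ŷ^k V^(k)(yŶ)], and this expectation is finite for every y > 0. -/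
open MeasureTheory Filter Set Topology

/-- Fix `k ≥ 1`.  Let `V` be `k`-times differentiable on `(0,∞)` (with
derivative sequence `dV`) such that `(−1)^{k−1} V^{(k−1)} > 0`, `(−1)^k V^{(k)} ≥ 0`, and
`c ≤ −y V^{(k)}(y)/V^{(k−1)}(y) ≤ d` on `(0,∞)` for constants `0 < c ≤ d < ∞`.  Let
`Ŷ > 0` be a random variable with `E[Ŷ^{k−1} (−1)^{k−1} V^{(k−1)}(yŶ)] < ∞` for every
`y > 0`.  Then `w(y) := E[Ŷ^{k−1} V^{(k−1)}(yŶ)]` is differentiable on `(0,∞)` with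
`w'(y) = E[Ŷ^k V^{(k)}(yŶ)]`, this expectation being finite for every `y > 0`. -/
theorem stmt15 {Ω : Type*} [MeasurableSpace Ω] (P : Measure Ω) [IsProbabilityMeasure P]
    (k : ℕ) (hk : 1 ≤ k) (V : ℝ → ℝ) (dV : ℕ → ℝ → ℝ) (hdV0 : dV 0 = V)
    (hderiv : ∀ j < k, ∀ y > (0:ℝ), HasDerivAt (dV j) (dV (j + 1) y) y)
    (hpos : ∀ y > (0:ℝ), 0 < (-1 : ℝ) ^ (k - 1) * dV (k - 1) y)
    (hnn : ∀ y > (0:ℝ), 0 ≤ (-1 : ℝ) ^ k * dV k y)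
    (c d : ℝ) (hc : 0 < c) (hcd : c ≤ d)
    (hbd : ∀ y > (0:ℝ), c ≤ -(y * dV k y) / dV (k - 1) y ∧
      -(y * dV k y) / dV (k - 1) y ≤ d)
    (Y : Ω → ℝ) (hYm : Measurable Y) (hYpos : ∀ ω, 0 < Y ω)
    (hint : ∀ y > (0:ℝ),
      MeasureTheory.Integrable (fun ω => Y ω ^ (k - 1) * dV (k - 1) (y * Y ω)) P) :
    ∀ y > (0:ℝ),
      MeasureTheory.Integrable (fun ω => Y ω ^ k * dV k (y * Y ω)) P ∧
      HasDerivAt (fun t => ∫ ω, Y ω ^ (k - 1) * dV (k - 1) (t * Y ω) ∂P)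
        (∫ ω, Y ω ^ k * dV k (y * Y ω) ∂P) y := by
  have hklt : k - 1 < k := Nat.sub_lt hk one_pos
  have hm : k - 1 + 1 = k := Nat.succ_pred_eq_of_pos hk
  have hD : ∀ z > (0:ℝ), HasDerivAt (dV (k - 1)) (dV k z) z := by
    intro z hz
    have := hderiv (k - 1) hklt z hz
    rwa [hm] at this
  have hcont : ContinuousOn (dV (k - 1)) (Ioi 0) := fun z hz =>
    (hD z hz).continuousAt.continuousWithinAt
  -- measurability of compositions
  have hmeasc : ∀ x > (0:ℝ), Measurable (fun ω => dV (k - 1) (x * Y ω)) := by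
    intro x hx
    have h1 : Measurable (fun ω => (⟨x * Y ω, mul_pos hx (hYpos ω)⟩ : Ioi (0:ℝ))) :=
      Measurable.subtype_mk (measurable_const.mul hYm)
    have h2 : Continuous (fun z : Ioi (0:ℝ) => dV (k - 1) z) :=
      continuousOn_iff_continuous_restrict.mp hcont
    exact h2.measurable.comp h1
  -- sign fact
  have hsign : ((-1:ℝ) ^ (k - 1)) = -((-1:ℝ) ^ k) := by
    have : (-1:ℝ) ^ k = (-1:ℝ) ^ (k - 1) * (-1) := by rw [← pow_succ, hm]
    rw [this]; ring
  -- g is antitone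
  have hanti : AntitoneOn (fun z => (-1:ℝ) ^ (k - 1) * dV (k - 1) z) (Ioi 0) := by
    apply antitoneOn_of_deriv_nonpos (convex_Ioi 0) (continuousOn_const.mul hcont)
    · intro z hz
      rw [interior_Ioi] at hz
      exact (((hD z hz).const_mul ((-1:ℝ) ^ (k - 1))).differentiableAt.differentiableWithinAt)
    intro z hz
    rw [interior_Ioi] at hz
    have hd : HasDerivAt (fun z => (-1:ℝ) ^ (k - 1) * dV (k - 1) z)
        ((-1:ℝ) ^ (k - 1) * dV k z) z := (hD z hz).const_mul _
    change deriv (fun z => (-1:ℝ) ^ (k - 1) * dV (k - 1) z) z ≤ 0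
    rw [hd.deriv]
    have h1 := hnn z hz
    rw [hsign]; linarith
  -- key pointwise bound
  have hkey : ∀ z > (0:ℝ), |z * dV k z| ≤ d * ((-1:ℝ) ^ (k - 1) * dV (k - 1) z) := by
    intro z hz
    obtain ⟨h1, h2⟩ := hbd z hz
    have hg := hpos z hz
    have hne : dV (k - 1) z ≠ 0 := by
      intro h; rw [h, mul_zero] at hg; exact lt_irrefl _ hg
    set r := -(z * dV k z) / dV (k - 1) z with hr
    have hzd : z * dV k z = -(r * dV (k - 1) z) := by
      rw [hr]; field_simp
    have habs : |dV (k - 1) z| = (-1:ℝ) ^ (k - 1) * dV (k - 1) z := by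
      rcases Nat.even_or_odd (k - 1) with he | ho
      · rw [he.neg_one_pow] at hg ⊢
        rw [one_mul] at hg ⊢
        exact abs_of_pos hg
      · rw [ho.neg_one_pow] at hg ⊢
        rw [neg_one_mul] at hg ⊢
        have : dV (k - 1) z < 0 := by linarith
        exact abs_of_neg this
    rw [hzd, abs_neg, abs_mul, habs]
    have hrc : 0 < r := lt_of_lt_of_le hc h1
    rw [abs_of_pos hrc]
    have := hpos z hz
    nlinarith
  intro y hy
  have hε : 0 < y / 2 := by positivity
  -- main application
  have main := hasDerivAt_integral_of_dominated_loc_of_deriv_le (μ := P)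
    (F := fun t ω => Y ω ^ (k - 1) * dV (k - 1) (t * Y ω))
    (F' := fun t ω => Y ω ^ k * dV k (t * Y ω))
    (bound := fun ω => (2 * d / y) * ‖Y ω ^ (k - 1) * dV (k - 1) (y / 2 * Y ω)‖)
    (x₀ := y) (Metric.ball_mem_nhds y hε)
    (by -- hF_meas
      filter_upwards [Metric.ball_mem_nhds y hε] with x hx
      have hx0 : 0 < x := by
        rw [Metric.mem_ball, Real.dist_eq] at hx
        have := abs_lt.mp hx; linarith [this.1]
      exact ((hYm.pow_const _).mul (hmeasc x hx0)).aestronglyMeasurable)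
    (hint y hy)
    (by -- hF'_meas
      have h1 : AEStronglyMeasurable
          (fun ω => Y ω ^ k * deriv (dV (k - 1)) (y * Y ω)) P :=
        ((hYm.pow_const _).mul
          ((measurable_deriv (dV (k - 1))).comp (measurable_const.mul hYm))).aestronglyMeasurable
      refine h1.congr (ae_of_all _ fun ω => ?_)
      simp only []
      rw [(hD (y * Y ω) (mul_pos hy (hYpos ω))).deriv])
    (by -- h_bound
      filter_upwards with ω x hx
      rw [Metric.mem_ball, Real.dist_eq] at hx
      have hax := abs_lt.mp hx
      have hx0 : y / 2 < x := by linarith [hax.1]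
      have hx0' : 0 < x := lt_trans hε hx0
      have hYω := hYpos ω
      have hzpos : 0 < x * Y ω := mul_pos hx0' hYω
      have hb1 := hkey (x * Y ω) hzpos
      have hmono : (-1:ℝ) ^ (k - 1) * dV (k - 1) (x * Y ω) ≤
          (-1:ℝ) ^ (k - 1) * dV (k - 1) (y / 2 * Y ω) := by
        apply hanti (mem_Ioi.mpr (mul_pos hε hYω)) (mem_Ioi.mpr hzpos)
        have := mul_lt_mul_of_pos_right hx0 hYω
        linarith
      have hgpos : 0 < (-1:ℝ) ^ (k - 1) * dV (k - 1) (y / 2 * Y ω) :=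
        hpos _ (mul_pos hε hYω)
      have hnorm : ‖Y ω ^ (k - 1) * dV (k - 1) (y / 2 * Y ω)‖ =
          Y ω ^ (k - 1) * ((-1:ℝ) ^ (k - 1) * dV (k - 1) (y / 2 * Y ω)) := by
        rw [Real.norm_eq_abs, abs_mul, abs_of_pos (pow_pos hYω _)]
        congr 1
        rcases Nat.even_or_odd (k - 1) with he | ho
        · rw [he.neg_one_pow, one_mul] at hgpos ⊢
          exact abs_of_pos hgpos
        · rw [ho.neg_one_pow, neg_one_mul] at hgpos ⊢
          exact abs_of_neg (by linarith)
      rw [hnorm, Real.norm_eq_abs]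
      have hYk : Y ω ^ k = Y ω ^ (k - 1) * Y ω := by rw [← pow_succ, hm]
      have hpk : (0:ℝ) < Y ω ^ (k - 1) := pow_pos hYω _
      -- |Y^k * dVk(xY)| = (Y^(k-1)/x) * |xY * dVk(xY)|
      have heq : |Y ω ^ k * dV k (x * Y ω)| =
          Y ω ^ (k - 1) / x * |x * Y ω * dV k (x * Y ω)| := by
        rw [abs_mul, abs_mul, abs_of_pos hzpos, hYk, abs_mul,
          abs_of_pos hpk, abs_of_pos hYω]
        field_simp
      rw [heq]
      have h1 : Y ω ^ (k - 1) / x * |x * Y ω * dV k (x * Y ω)| ≤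
          Y ω ^ (k - 1) / x * (d * ((-1:ℝ) ^ (k - 1) * dV (k - 1) (x * Y ω))) := by
        apply mul_le_mul_of_nonneg_left hb1 (by positivity)
      refine h1.trans ?_
      have hd0 : 0 < d := lt_of_lt_of_le hc hcd
      have h2 : Y ω ^ (k - 1) / x ≤ Y ω ^ (k - 1) * (2 / y) := by
        have hinv : 1 / x ≤ 2 / y := by
          rw [div_le_div_iff₀ hx0' hy]; nlinarith
        calc Y ω ^ (k - 1) / x = Y ω ^ (k - 1) * (1 / x) := by ring
          _ ≤ Y ω ^ (k - 1) * (2 / y) := mul_le_mul_of_nonneg_left hinv hpk.le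
      have hgx : 0 < (-1:ℝ) ^ (k - 1) * dV (k - 1) (x * Y ω) := hpos _ hzpos
      calc Y ω ^ (k - 1) / x * (d * ((-1:ℝ) ^ (k - 1) * dV (k - 1) (x * Y ω)))
          ≤ Y ω ^ (k - 1) * (2 / y) * (d * ((-1:ℝ) ^ (k - 1) * dV (k - 1) (x * Y ω))) := by
            apply mul_le_mul_of_nonneg_right h2 (by positivity)
        _ ≤ Y ω ^ (k - 1) * (2 / y) * (d * ((-1:ℝ) ^ (k - 1) * dV (k - 1) (y / 2 * Y ω))) := by
            apply mul_le_mul_of_nonneg_left _ (by positivity)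
            exact mul_le_mul_of_nonneg_left hmono (le_of_lt hd0)
        _ = 2 * d / y * (Y ω ^ (k - 1) * ((-1:ℝ) ^ (k - 1) * dV (k - 1) (y / 2 * Y ω))) := by
            ring)
    (((hint (y / 2) hε).norm).const_mul (2 * d / y))
    (by -- h_diff
      filter_upwards with ω x hx
      rw [Metric.mem_ball, Real.dist_eq] at hx
      have hax := abs_lt.mp hx
      have hx0' : 0 < x := by linarith [hax.1]
      have hzpos : 0 < x * Y ω := mul_pos hx0' (hYpos ω)
      have h1 : HasDerivAt (fun t => dV (k - 1) (t * Y ω)) (dV k (x * Y ω) * Y ω) x :=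
        (hD (x * Y ω) hzpos).comp x (hasDerivAt_mul_const (Y ω))
      have h2 := h1.const_mul (Y ω ^ (k - 1))
      refine h2.congr_deriv ?_
      have hYk : Y ω ^ k = Y ω ^ (k - 1) * Y ω := by rw [← pow_succ, hm]
      rw [hYk]; ring)
  exact main
end

section
/- Let ξ and η be nonnegative integrable random variables on a probability space such that ξ ≥ E[η | σ(ξ)] almost surely, where σ(ξ) is the sigma-algebra generated by ξ. Then ξ ⪰₂ η; that is, F_{ξ,2}(y) ≤ F_{η,2}(y) for every y ≥ 0, equivalently E[(y − ξ)⁺] ≤ E[(y − η)⁺] for every y ≥ 0. -/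
open MeasureTheory Filter Set Topology ENNReal

private lemma ofReal_max_zero (x : ℝ) : ENNReal.ofReal (max x 0) = ENNReal.ofReal x := by
  rcases max_cases x 0 with ⟨h1, _⟩ | ⟨h1, h2⟩
  · rw [h1]
  · rw [h1, ENNReal.ofReal_zero, Eq.comm, ENNReal.ofReal_eq_zero]
    exact h2.le

/-- Key identity: `∫₀^y P(ξ ≤ t) dt = E[(y-ξ)⁺]` for `ξ ≥ 0`, `y ≥ 0`. -/
private lemma cdf_int_eq {Ω : Type*} [MeasurableSpace Ω] (P : Measure Ω)
    [IsProbabilityMeasure P] (ξ : Ω → ℝ) (hξm : Measurable ξ) (hξ0 : ∀ ω, 0 ≤ ξ ω)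
    {y : ℝ} (hy : 0 ≤ y) :
    ∫ t in (0:ℝ)..y, (P {ω | ξ ω ≤ t}).toReal = ∫ ω, max (y - ξ ω) 0 ∂P := by
  have hsm : AEStronglyMeasurable (fun ω => max (y - ξ ω) 0) P := by
    apply Measurable.aestronglyMeasurable
    exact (measurable_const.sub hξm).max measurable_const
  have h0 : 0 ≤ᵐ[P] fun ω => max (y - ξ ω) 0 :=
    Filter.Eventually.of_forall fun ω => le_max_right _ _
  have hmono : Monotone fun t => P {ω | ξ ω ≤ t} :=
    fun a b hab => measure_mono fun ω h => le_trans h hab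
  have hmeas : Measurable fun t => P {ω | ξ ω ≤ t} := hmono.measurable
  rw [intervalIntegral.integral_of_le hy,
    MeasureTheory.integral_toReal (hmeas.aemeasurable.restrict)
      (Filter.Eventually.of_forall fun t => measure_lt_top P _),
    MeasureTheory.integral_eq_lintegral_of_nonneg_ae h0 hsm]
  congr 1
  have hS : MeasurableSet {p : ℝ × Ω | ξ p.2 ≤ p.1} :=
    measurableSet_le (hξm.comp measurable_snd) measurable_fst
  calc ∫⁻ t in Ioc 0 y, P {ω | ξ ω ≤ t}
      = ∫⁻ t in Ioc 0 y, ∫⁻ ω, Set.indicator {p : ℝ × Ω | ξ p.2 ≤ p.1} (1 : ℝ × Ω → ℝ≥0∞) (t, ω) ∂P := by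
        refine lintegral_congr fun t => ?_
        have : ∀ ω, Set.indicator {p : ℝ × Ω | ξ p.2 ≤ p.1} (1 : ℝ × Ω → ℝ≥0∞) (t, ω)
            = Set.indicator {ω | ξ ω ≤ t} (1 : Ω → ℝ≥0∞) ω := fun ω => rfl
        simp_rw [this]
        rw [lintegral_indicator_one (show MeasurableSet {ω | ξ ω ≤ t} from
          hξm measurableSet_Iic)]
    _ = ∫⁻ ω, ∫⁻ t in Ioc 0 y, Set.indicator {p : ℝ × Ω | ξ p.2 ≤ p.1} (1 : ℝ × Ω → ℝ≥0∞) (t, ω) ∂(volume : Measure ℝ) ∂P := by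
        exact lintegral_lintegral_swap
          ((measurable_one.indicator hS).aemeasurable)
    _ = ∫⁻ ω, ENNReal.ofReal (y - ξ ω) ∂P := by
        refine lintegral_congr fun ω => ?_
        have : ∀ t : ℝ, Set.indicator {p : ℝ × Ω | ξ p.2 ≤ p.1} (1 : ℝ × Ω → ℝ≥0∞) (t, ω)
            = Set.indicator (Ici (ξ ω)) (1 : ℝ → ℝ≥0∞) t := fun t => rfl
        simp_rw [this]
        rw [lintegral_indicator_one measurableSet_Ici,
          Measure.restrict_apply measurableSet_Ici]
        rcases (hξ0 ω).eq_or_lt with h0 | h0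
        · rw [← h0]
          have : Ici (0:ℝ) ∩ Ioc 0 y = Ioc 0 y := by
            ext t; simp only [mem_inter_iff, mem_Ici, mem_Ioc]
            exact ⟨fun h => h.2, fun h => ⟨h.1.le, h⟩⟩
          rw [this, Real.volume_Ioc, sub_zero]
        · have : Ici (ξ ω) ∩ Ioc 0 y = Icc (ξ ω) y := by
            ext t; simp only [mem_inter_iff, mem_Ici, mem_Ioc, mem_Icc]
            exact ⟨fun h => ⟨h.1, h.2.2⟩, fun h => ⟨h.1, lt_of_lt_of_le h0 h.1, h.2⟩⟩
          rw [this, Real.volume_Icc]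
    _ = ∫⁻ ω, ENNReal.ofReal (max (y - ξ ω) 0) ∂P := by
        refine lintegral_congr fun ω => ?_
        rw [ofReal_max_zero]

private lemma exp_pos_part_mono {Ω : Type*} [inst : MeasurableSpace Ω] (P : Measure Ω)
    [IsProbabilityMeasure P] {m : MeasurableSpace Ω} (hle : m ≤ inst) (ξ η : Ω → ℝ)
    (hξi : MeasureTheory.Integrable ξ P) (hηi : MeasureTheory.Integrable η P)
    (hcond : ∀ᵐ ω ∂P, (P[η | m]) ω ≤ ξ ω) (y : ℝ) :
    ∫ ω, max (y - ξ ω) 0 ∂P ≤ ∫ ω, max (y - η ω) 0 ∂P := by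
  haveI : SigmaFinite (P.trim hle) := inferInstance
  have hfi : Integrable (fun ω => max (y - η ω) 0) P :=
    ((integrable_const y).sub hηi).pos_part
  have hsub : Integrable ((fun _ : Ω => y) - η) P := (integrable_const y).sub hηi
  have h1 : (P[(fun _ : Ω => y) - η | m]) ≤ᵐ[P] P[fun ω => max (y - η ω) 0 | m] :=
    condExp_mono hsub hfi
      (Filter.Eventually.of_forall fun ω => le_max_left _ _)
  have h2 : (P[(fun _ : Ω => y) - η | m]) =ᵐ[P] fun ω => y - (P[η | m]) ω := by
    filter_upwards [condExp_sub (integrable_const y) hηi m] with ω hω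
    rw [hω]
    simp [condExp_const hle]
  have h3 : 0 ≤ᵐ[P] P[fun ω => max (y - η ω) 0 | m] :=
    condExp_nonneg (Filter.Eventually.of_forall fun ω => le_max_right _ _)
  have h4 : (fun ω => max (y - ξ ω) 0) ≤ᵐ[P] P[fun ω => max (y - η ω) 0 | m] := by
    filter_upwards [h1, h2, h3, hcond] with ω h1 h2 h3 hc
    refine max_le ?_ h3
    calc y - ξ ω ≤ y - (P[η | m]) ω := by linarith
      _ = (P[(fun _ : Ω => y) - η | m]) ω := h2.symm
      _ ≤ _ := h1
  have hgi : Integrable (fun ω => max (y - ξ ω) 0) P :=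
    ((integrable_const y).sub hξi).pos_part
  calc ∫ ω, max (y - ξ ω) 0 ∂P ≤ ∫ ω, (P[fun ω => max (y - η ω) 0 | m]) ω ∂P :=
        integral_mono_ae hgi integrable_condExp h4
    _ = ∫ ω, max (y - η ω) 0 ∂P := integral_condExp hle

/-- Let `ξ, η ≥ 0` be integrable random variables with
`ξ ≥ E[η | σ(ξ)]` almost surely.  Then `ξ ⪰₂ η`: `F_{ξ,2}(y) ≤ F_{η,2}(y)` for every
`y ≥ 0`, equivalently `E[(y − ξ)⁺] ≤ E[(y − η)⁺]` for every `y ≥ 0`. -/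
theorem stmt19 {Ω : Type*} [MeasurableSpace Ω] (P : Measure Ω) [IsProbabilityMeasure P]
    (ξ η : Ω → ℝ) (hξm : Measurable ξ) (hηm : Measurable η)
    (hξ0 : ∀ ω, 0 ≤ ξ ω) (hη0 : ∀ ω, 0 ≤ η ω)
    (hξi : MeasureTheory.Integrable ξ P) (hηi : MeasureTheory.Integrable η P)
    (hcond : ∀ᵐ ω ∂P,
      (P[η | MeasurableSpace.comap ξ Real.measurableSpace]) ω ≤ ξ ω) :
    ∀ y ≥ (0:ℝ),
      iterCdf (fun t => (P {ω | ξ ω ≤ t}).toReal) 1 y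
        ≤ iterCdf (fun t => (P {ω | η ω ≤ t}).toReal) 1 y ∧
      ∫ ω, max (y - ξ ω) 0 ∂P ≤ ∫ ω, max (y - η ω) 0 ∂P := by
  intro y hy
  have hle : MeasurableSpace.comap ξ Real.measurableSpace ≤ _ := hξm.comap_le
  have hfi : Integrable (fun ω => max (y - η ω) 0) P :=
    ((integrable_const y).sub hηi).pos_part
  have hgi : Integrable (fun ω => max (y - ξ ω) 0) P :=
    ((integrable_const y).sub hξi).pos_part
  have key : ∫ ω, max (y - ξ ω) 0 ∂P ≤ ∫ ω, max (y - η ω) 0 ∂P :=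
    exp_pos_part_mono P hle ξ η hξi hηi hcond y
  refine ⟨?_, key⟩
  show (∫ t in (0:ℝ)..y, iterCdf (fun t => (P {ω | ξ ω ≤ t}).toReal) 0 t)
      ≤ ∫ t in (0:ℝ)..y, iterCdf (fun t => (P {ω | η ω ≤ t}).toReal) 0 t
  simp only [iterCdf]
  rw [cdf_int_eq P ξ hξm hξ0 hy, cdf_int_eq P η hηm hη0 hy]
  exact key
end
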